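/- arXiv:2306.01264 — 13 statements merged into one kernel-verified Lean document; each statement's English description precedes it below -/
import Mathlib

section
/- For all p ∈ (0,1] and t ≥ 0, t ≤ (2/√p)·log(e + 1/p)·(p(1+√p)^t + 1). -/
theorem t_le_log_bound (p t : ℝ) (hp0 : 0 < p) (hp1 : p ≤ 1) (ht : 0 ≤ t) :
    t ≤ 2 / Real.sqrt p * Real.log (Real.exp 1 + 1 / p) *
      (p * (1 + Real.sqrt p) ^ t + 1) := by
  set s := Real.sqrt p with hs
  have hs0 : 0 < s := Real.sqrt_pos.mpr hp0
  have hs1 : s ≤ 1 := Real.sqrt_le_one.mpr hp1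
  set L := Real.log (Real.exp 1 + 1 / p) with hLdef
  have hp' : (0:ℝ) < 1 / p := by positivity
  have hL1 : 1 ≤ L := by
    have := Real.log_le_log (Real.exp_pos 1) (by linarith : Real.exp 1 ≤ Real.exp 1 + 1/p)
    simpa [hLdef, one_div, Real.log_exp] using this
  have hLp : Real.log (1 / p) ≤ L := by
    apply Real.log_le_log hp'
    have := (Real.exp_pos 1).le
    linarith
  -- log(1+s) ≥ s/2
  have hlog : s / 2 ≤ Real.log (1 + s) := by
    rw [Real.le_log_iff_exp_le (by linarith)]
    have h1 : 1 - s/2 ≤ Real.exp (-(s/2)) := by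
      have := Real.add_one_le_exp (-(s/2)); linarith
    have h2 : Real.exp (s/2) * (1 - s/2) ≤ 1 := by
      calc Real.exp (s/2) * (1 - s/2) ≤ Real.exp (s/2) * Real.exp (-(s/2)) := by
            apply mul_le_mul_of_nonneg_left h1 (Real.exp_pos _).le
        _ = 1 := by rw [← Real.exp_add]; simp
    nlinarith [Real.exp_pos (s/2), sq_nonneg s]
  -- p * (1+s)^t ≥ exp (t*s/2 - L)
  have hpow : Real.exp (t * s / 2 - L) ≤ p * (1 + s) ^ t := by
    have h1 : (1 + s) ^ t = Real.exp (Real.log (1 + s) * t) :=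
      Real.rpow_def_of_pos (by linarith) t
    have h2 : p * (1 + s) ^ t = Real.exp (Real.log (1 + s) * t + Real.log p) := by
      rw [h1, Real.exp_add, Real.exp_log hp0]; ring
    rw [h2]
    apply Real.exp_le_exp.mpr
    have h3 : t * (s/2) ≤ Real.log (1 + s) * t := by
      have := mul_le_mul_of_nonneg_right hlog ht; linarith [this]
    have h4 : Real.log (1/p) = - Real.log p := by
      rw [one_div, Real.log_inv]
    linarith
  -- finish
  have hP0 : 0 ≤ p * (1 + s) ^ t := by positivity
  have hPge : t * s / 2 - L ≤ p * (1 + s) ^ t := by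
    have := Real.add_one_le_exp (t * s / 2 - L)
    linarith
  rw [div_mul_eq_mul_div, div_mul_eq_mul_div, le_div_iff₀ hs0]
  nlinarith [mul_le_mul_of_nonneg_right hL1 hP0]
end

section
/- Let 0 < ημ < 1 and define B_0 = 0, B_{t+1} = (2B_t + 1 + √(4B_t + 4ημB_t² + 1)) / (2(1−ημ)). Then for all t ≥ 1, B_t/(1−√(ημ)) ≤ B_{t+1} ≤ 3B_t/(1−ημ), and consequently B_t ≥ (1+√(ημ))^{t−1}. -/
theorem nag_sc_weight_growth (η μ : ℝ) (hη : 0 < η) (hμ : 0 < μ) (hημ : η * μ < 1)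
    (B : ℕ → ℝ) (hB0 : B 0 = 0)
    (hBrec : ∀ t : ℕ, B (t + 1) =
      (2 * B t + 1 + Real.sqrt (4 * B t + 4 * (η * μ) * B t ^ 2 + 1)) / (2 * (1 - η * μ))) :
    ∀ t : ℕ, 1 ≤ t →
      (B t / (1 - Real.sqrt (η * μ)) ≤ B (t + 1) ∧
        B (t + 1) ≤ 3 * B t / (1 - η * μ)) ∧
      (1 + Real.sqrt (η * μ)) ^ (t - 1) ≤ B t := by
  set a := η * μ with ha
  have ha0 : 0 < a := mul_pos hη hμ
  set s := Real.sqrt a with hsdef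
  have hs0 : 0 < s := Real.sqrt_pos.mpr ha0
  have hs2 : s ^ 2 = a := Real.sq_sqrt ha0.le
  have hs1 : s < 1 := by nlinarith [hs2, hημ]
  have h1a : 0 < 1 - a := by linarith
  have h1s : 0 < 1 - s := by linarith
  -- step lemma
  have step : ∀ t : ℕ, 1 ≤ B t →
      B t / (1 - s) ≤ B (t + 1) ∧ B (t + 1) ≤ 3 * B t / (1 - a) := by
    intro t hb1
    set b := B t with hbdef
    have hb0 : (0:ℝ) ≤ b := by linarith
    set r := Real.sqrt (4 * b + 4 * a * b ^ 2 + 1) with hrdef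
    have hr0 : 0 ≤ r := Real.sqrt_nonneg _
    have hr2 : r ^ 2 = 4 * b + 4 * a * b ^ 2 + 1 := by
      apply Real.sq_sqrt; nlinarith
    have hrlow : 2 * s * b ≤ r := by
      rw [hrdef, Real.le_sqrt (by positivity) (by nlinarith)]
      nlinarith
    have hrhigh : r ≤ 4 * b - 1 := by
      rw [hrdef]
      have h4 : (4 * b - 1) = Real.sqrt ((4 * b - 1) ^ 2) :=
        (Real.sqrt_sq (by linarith)).symm
      rw [h4]
      apply Real.sqrt_le_sqrt
      nlinarith
    have hrec := hBrec t
    rw [← hrdef] at hrec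
    constructor
    · rw [hrec, div_le_div_iff₀ h1s (by linarith)]
      nlinarith
    · rw [hrec, div_le_div_iff₀ (by linarith) h1a]
      nlinarith
  -- growth lemma
  have growth : ∀ t : ℕ, 1 ≤ t → (1 + s) ^ (t - 1) ≤ B t := by
    intro t
    induction t with
    | zero => intro h; omega
    | succ n ih =>
      intro _
      by_cases hn : n = 0
      · subst hn
        have hB1 := hBrec 0
        rw [hB0] at hB1
        have hsq : Real.sqrt (4 * 0 + 4 * a * 0 ^ 2 + 1) = 1 := by norm_num
        rw [hsq] at hB1
        simp only [Nat.sub_self, pow_zero] at *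
        rw [hB1, le_div_iff₀ (by linarith)]
        nlinarith
      · have hn1 : 1 ≤ n := Nat.pos_of_ne_zero hn
        have hbn := ih hn1
        have hpow1 : (1:ℝ) ≤ (1 + s) ^ (n - 1) := one_le_pow₀ (by linarith)
        have hb1 : 1 ≤ B n := le_trans hpow1 hbn
        have hlow := (step n hb1).1
        have hmul : B n * (1 + s) ≤ B n / (1 - s) := by
          rw [le_div_iff₀ h1s]
          nlinarith
        have hpow : (1 + s) ^ (n + 1 - 1) = (1 + s) ^ (n - 1) * (1 + s) := by
          rw [Nat.add_sub_cancel, ← pow_succ]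
          congr 1
          omega
        rw [hpow]
        calc (1 + s) ^ (n - 1) * (1 + s) ≤ B n * (1 + s) := by nlinarith
          _ ≤ B n / (1 - s) := hmul
          _ ≤ B (n + 1) := hlow
  intro t ht
  have hbt := growth t ht
  have hb1 : 1 ≤ B t := le_trans (one_le_pow₀ (by linarith)) hbt
  exact ⟨step t hb1, hbt⟩
end

section
/- Let 0 < ημ < 1 and define B_0 = 0, B_{t+1} = (2B_t + 1 + √(4B_t + 4ημB_t² + 1)) / (2(1−ημ)). Then for all t ≥ 1, ∑_{s=0}^{t} √(B_s) ≤ (1−ημ) B_{t+1} ≤ 3 B_t. -/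
theorem nag_sc_weight_sum (η μ : ℝ) (hη : 0 < η) (hμ : 0 < μ) (hημ : η * μ < 1)
    (B : ℕ → ℝ) (hB0 : B 0 = 0)
    (hBrec : ∀ t : ℕ, B (t + 1) =
      (2 * B t + 1 + Real.sqrt (4 * B t + 4 * (η * μ) * B t ^ 2 + 1)) / (2 * (1 - η * μ))) :
    ∀ t : ℕ, 1 ≤ t →
      (∑ s ∈ Finset.range (t + 1), Real.sqrt (B s)) ≤ (1 - η * μ) * B (t + 1) ∧
      (1 - η * μ) * B (t + 1) ≤ 3 * B t := by
  set c := η * μ with hc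
  have hc0 : 0 < c := mul_pos hη hμ
  have hc1 : 0 < 1 - c := by linarith
  have hnn : ∀ t, 0 ≤ B t := by
    intro t
    induction t with
    | zero => rw [hB0]
    | succ n ih =>
      rw [hBrec n]
      apply div_nonneg
      · have := Real.sqrt_nonneg (4 * B n + 4 * c * B n ^ 2 + 1)
        linarith
      · linarith
  have heq : ∀ t, (1 - c) * B (t + 1)
      = B t + (1 + Real.sqrt (4 * B t + 4 * c * B t ^ 2 + 1)) / 2 := by
    intro t
    rw [hBrec t]
    field_simp
    ring
  have hsqrtD_ge : ∀ t, 2 * Real.sqrt (B t)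
      ≤ Real.sqrt (4 * B t + 4 * c * B t ^ 2 + 1) := by
    intro t
    have h1 : Real.sqrt (4 * B t) ≤ Real.sqrt (4 * B t + 4 * c * B t ^ 2 + 1) := by
      apply Real.sqrt_le_sqrt
      nlinarith [hnn t, sq_nonneg (B t)]
    have h2 : Real.sqrt (4 * B t) = 2 * Real.sqrt (B t) := by
      rw [show (4 : ℝ) * B t = 2 ^ 2 * B t by ring,
        Real.sqrt_mul (by positivity), Real.sqrt_sq (by norm_num)]
    linarith
  have hkey : ∀ t, B t + Real.sqrt (B t) ≤ (1 - c) * B (t + 1) := by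
    intro t
    rw [heq t]
    have := hsqrtD_ge t
    linarith
  have hge1 : ∀ t, 1 ≤ t → 1 ≤ B t := by
    intro t ht
    induction t with
    | zero => omega
    | succ n ih =>
      rcases Nat.eq_zero_or_pos n with h0 | h0
      · subst h0
        rw [hBrec 0, hB0]
        have : Real.sqrt (4 * 0 + 4 * c * 0 ^ 2 + 1) = 1 := by
          norm_num
        rw [this]
        rw [le_div_iff₀ (by linarith)]
        nlinarith
      · have hBn := ih h0
        have h := hkey n
        have hs := Real.sqrt_nonneg (B n)
        nlinarith [hnn (n + 1)]
  have hsum : ∀ t, (∑ s ∈ Finset.range (t + 1), Real.sqrt (B s)) ≤ (1 - c) * B (t + 1) := by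
    intro t
    induction t with
    | zero =>
      simp [hB0]
      exact mul_nonneg hc1.le (hnn 1)
    | succ n ih =>
      rw [Finset.sum_range_succ]
      have h := hkey (n + 1)
      have hcB : 0 ≤ c * B (n + 1) := mul_nonneg hc0.le (hnn (n + 1))
      nlinarith
  intro t ht
  refine ⟨hsum t, ?_⟩
  rw [heq t]
  have hB1 := hge1 t ht
  have hD : Real.sqrt (4 * B t + 4 * c * B t ^ 2 + 1) ≤ 4 * B t - 1 := by
    have h1 : Real.sqrt (4 * B t + 4 * c * B t ^ 2 + 1) ≤ Real.sqrt ((4 * B t - 1) ^ 2) := by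
      apply Real.sqrt_le_sqrt
      nlinarith
    rwa [Real.sqrt_sq (by linarith)] at h1
  linarith
end

section
/- For the function f(x) = 1/x on (0, ∞), for any ρ < 1.5 and any constants L_0, L_ρ ≥ 0 there exists x > 0 with |f''(x)| > L_0 + L_ρ |f'(x)|^ρ. In particular, f is not (ρ, L_0, L_ρ)-smooth for any ρ < 1.5. -/
open Real

theorem inv_not_rho_smooth (ρ L0 Lρ : ℝ) (hρ : ρ < 1.5) (hL0 : 0 ≤ L0) (hLρ : 0 ≤ Lρ) :
    let f : ℝ → ℝ := fun x => 1 / x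
    ∃ x : ℝ, 0 < x ∧ |deriv (deriv f) x| > L0 + Lρ * |deriv f x| ^ ρ := by
  intro f
  set ε : ℝ := 3 - 2*ρ with hε
  have hε0 : 0 < ε := by rw [hε]; norm_num at hρ ⊢; linarith
  set t : ℝ := max 1 (max (L0+1) (Lρ^(ε⁻¹)+1)) with ht
  have ht1 : (1:ℝ) ≤ t := le_max_left _ _
  have ht0 : (0:ℝ) < t := lt_of_lt_of_le one_pos ht1
  have hx0 : (t⁻¹ : ℝ) ≠ 0 := inv_ne_zero ht0.ne'
  refine ⟨t⁻¹, inv_pos.mpr ht0, ?_⟩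
  have hdf : deriv f = fun y : ℝ => -(y^2)⁻¹ := by
    funext y; simp [f, one_div, deriv_inv]
  have hd2 : HasDerivAt (fun y : ℝ => -(y^2)⁻¹) (2 * t^3) t⁻¹ := by
    have h := ((hasDerivAt_pow 2 (t⁻¹)).inv (pow_ne_zero 2 hx0)).neg
    refine h.congr_deriv ?_
    have ht0' : t ≠ 0 := ht0.ne'
    norm_num
    field_simp
  have hD2 : deriv (deriv f) t⁻¹ = 2 * t^3 := by
    rw [hdf]; exact hd2.deriv
  have hD1 : |deriv f t⁻¹| = t^2 := by
    rw [hdf]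
    rw [abs_neg, abs_inv, abs_of_pos (by positivity : (0:ℝ) < t⁻¹^2)]
    field_simp
  rw [hD2, hD1, abs_of_pos (by positivity)]
  -- key inequality: L0 + Lρ * (t^2)^ρ < 2 * t^3
  have htL0 : L0 + 1 ≤ t := le_trans (le_max_left _ _) (le_max_right _ _)
  have htLρ : Lρ^(ε⁻¹) + 1 ≤ t := le_trans (le_max_right _ _) (le_max_right _ _)
  have h1 : L0 < t^3 := by
    have : t ≤ t^3 := le_self_pow₀ ht1 (by norm_num)
    linarith
  have h2 : Lρ < t ^ ε := by
    have hb : (0:ℝ) ≤ Lρ^(ε⁻¹) := rpow_nonneg hLρ _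
    have := rpow_lt_rpow hb (by linarith : Lρ^(ε⁻¹) < t) hε0
    rwa [← rpow_mul hLρ, inv_mul_cancel₀ hε0.ne', rpow_one] at this
  have h3 : Lρ * (t^2 : ℝ)^ρ < t^ε * (t^2 : ℝ)^ρ :=
    mul_lt_mul_of_pos_right h2 (rpow_pos_of_pos (by positivity) ρ)
  have h4 : t^ε * (t^2 : ℝ)^ρ = t^3 := by
    rw [← rpow_natCast t 2, ← rpow_natCast t 3, ← rpow_mul ht0.le, ← rpow_add ht0]
    norm_num [hε]
  linarith [h1, h3, h4]
end

section
/- Let f: 𝒳 → ℝ be differentiable on an open set 𝒳 ⊆ ℝ^d, and suppose f is (r,ℓ)-smooth: ℓ is non-decreasing, r is non-increasing, for every x ∈ 𝒳 the closed ball B(x, r(‖∇f(x)‖)) ⊆ 𝒳, and ∇f is ℓ(‖∇f(x)‖)-Lipschitz on this ball. Then for any x ∈ 𝒳 with ‖∇f(x)‖ ≤ G, setting L = ℓ(G): B(x, r(G)) ⊆ 𝒳, and for all x_1, x_2 ∈ B(x, r(G)), f(x_1) ≤ f(x_2) + ⟨∇f(x_2), x_1 − x_2⟩ + (L/2)‖x_1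 − x_2‖². -/
open RealInnerProductSpace

theorem descent_lemma_generalized_smooth (d : ℕ)
    (X : Set (EuclideanSpace ℝ (Fin d))) (hX : IsOpen X)
    (f : EuclideanSpace ℝ (Fin d) → ℝ)
    (g : EuclideanSpace ℝ (Fin d) → EuclideanSpace ℝ (Fin d))
    (hgrad : ∀ x ∈ X, HasGradientAt f (g x) x)
    (ℓ r : ℝ → ℝ) (hℓmono : Monotone ℓ) (hℓpos : ∀ u : ℝ, 0 ≤ u → 0 < ℓ u)
    (hranti : Antitone r) (hrpos : ∀ u : ℝ, 0 ≤ u → 0 < r u)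
    (hball : ∀ x ∈ X, Metric.closedBall x (r ‖g x‖) ⊆ X)
    (hlip : ∀ x ∈ X, ∀ x₁ ∈ Metric.closedBall x (r ‖g x‖),
      ∀ x₂ ∈ Metric.closedBall x (r ‖g x‖),
        ‖g x₁ - g x₂‖ ≤ ℓ ‖g x‖ * ‖x₁ - x₂‖)
    (x : EuclideanSpace ℝ (Fin d)) (hx : x ∈ X) (G : ℝ) (hG : ‖g x‖ ≤ G) :
    Metric.closedBall x (r G) ⊆ X ∧
    ∀ x₁ ∈ Metric.closedBall x (r G), ∀ x₂ ∈ Metric.closedBall x (r G),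
      f x₁ ≤ f x₂ + ⟪g x₂, x₁ - x₂⟫ + ℓ G / 2 * ‖x₁ - x₂‖ ^ 2 := by
  have hsub : Metric.closedBall x (r G) ⊆ Metric.closedBall x (r ‖g x‖) :=
    Metric.closedBall_subset_closedBall (hranti hG)
  have hXsub : Metric.closedBall x (r G) ⊆ X := hsub.trans (hball x hx)
  refine ⟨hXsub, ?_⟩
  intro x₁ hx₁ x₂ hx₂
  set L : ℝ := ℓ ‖g x‖ with hL
  have hLG : L ≤ ℓ G := hℓmono hG
  set v : EuclideanSpace ℝ (Fin d) := x₁ - x₂ with hv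
  set c : ℝ → EuclideanSpace ℝ (Fin d) := fun t => x₂ + t • v with hc
  have hconv : Convex ℝ (Metric.closedBall x (r G)) := convex_closedBall _ _
  have hmem : ∀ t ∈ Set.Icc (0:ℝ) 1, c t ∈ Metric.closedBall x (r G) := by
    intro t ht
    exact hconv.add_smul_sub_mem hx₂ hx₁ ht
  set A : ℝ := ⟪g x₂, v⟫ with hA
  set φ : ℝ → ℝ := fun t => f (c t) - (t * A + L / 2 * ‖v‖ ^ 2 * t ^ 2) with hφ
  have hderiv : ∀ t ∈ Set.Icc (0:ℝ) 1,
      HasDerivAt φ (⟪g (c t), v⟫ - (A + L * ‖v‖ ^ 2 * t)) t := by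
    intro t ht
    have hct : c t ∈ X := hXsub (hmem t ht)
    have hcderiv : HasDerivAt c v t := by
      have : HasDerivAt (fun s : ℝ => s • v) ((1:ℝ) • v) t :=
        (hasDerivAt_id t).smul_const v
      simpa [hc] using this.const_add x₂
    have hf : HasDerivAt (fun s => f (c s)) (⟪g (c t), v⟫) t := by
      have := (hgrad (c t) hct).hasFDerivAt.comp_hasDerivAt t hcderiv
      simp [InnerProductSpace.toDual_apply_apply] at this
      exact this
    have hq : HasDerivAt (fun s : ℝ => s * A + L / 2 * ‖v‖ ^ 2 * s ^ 2)
        (A + L * ‖v‖ ^ 2 * t) t := by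
      have h1 : HasDerivAt (fun s : ℝ => s * A) A t := by
        simpa using (hasDerivAt_id t).mul_const A
      have h2 : HasDerivAt (fun s : ℝ => L / 2 * ‖v‖ ^ 2 * s ^ 2)
          (L / 2 * ‖v‖ ^ 2 * (2 * t)) t := by
        have := (hasDerivAt_pow 2 t).const_mul (L / 2 * ‖v‖ ^ 2)
        simpa using this
      have := h1.add h2
      exact this.congr_deriv (by ring)
    exact hf.sub hq
  have hderiv_nonpos : ∀ t ∈ Set.Icc (0:ℝ) 1,
      ⟪g (c t), v⟫ - (A + L * ‖v‖ ^ 2 * t) ≤ 0 := by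
    intro t ht
    have hlipb : ‖g (c t) - g x₂‖ ≤ L * ‖c t - x₂‖ :=
      hlip x hx (c t) (hsub (hmem t ht)) x₂ (hsub hx₂)
    have hctx : c t - x₂ = t • v := by simp [hc]
    have hnorm : ‖c t - x₂‖ = t * ‖v‖ := by
      rw [hctx, norm_smul, Real.norm_eq_abs, abs_of_nonneg ht.1]
    have key : ⟪g (c t) - g x₂, v⟫ ≤ L * ‖v‖ ^ 2 * t := by
      calc ⟪g (c t) - g x₂, v⟫ ≤ ‖g (c t) - g x₂‖ * ‖v‖ := real_inner_le_norm _ _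
        _ ≤ L * (t * ‖v‖) * ‖v‖ := by
            apply mul_le_mul_of_nonneg_right _ (norm_nonneg v)
            rw [← hnorm]; exact hlipb
        _ = L * ‖v‖ ^ 2 * t := by ring
    have : ⟪g (c t), v⟫ - A = ⟪g (c t) - g x₂, v⟫ := by
      rw [inner_sub_left]
    linarith
  have hanti : AntitoneOn φ (Set.Icc (0:ℝ) 1) := by
    apply antitoneOn_of_deriv_nonpos (convex_Icc 0 1)
    · exact fun t ht => ((hderiv t ht).continuousAt).continuousWithinAt
    · intro t ht
      rw [interior_Icc] at ht
      exact ((hderiv t (Set.mem_Icc_of_Ioo ht)).differentiableAt).differentiableWithinAt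
    · intro t ht
      rw [interior_Icc] at ht
      rw [(hderiv t (Set.mem_Icc_of_Ioo ht)).deriv]
      exact hderiv_nonpos t (Set.mem_Icc_of_Ioo ht)
  have h01 : φ 1 ≤ φ 0 := hanti (Set.mem_Icc.2 ⟨le_refl 0, zero_le_one⟩)
    (Set.mem_Icc.2 ⟨zero_le_one, le_refl 1⟩) zero_le_one
  have hc1 : c 1 = x₁ := by simp [hc, hv]
  have hc0 : c 0 = x₂ := by simp [hc]
  have hφ1 : φ 1 = f x₁ - (A + L / 2 * ‖v‖ ^ 2) := by simp [hφ, hc1]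
  have hφ0 : φ 0 = f x₂ := by simp [hφ, hc0]
  have hL2 : L / 2 * ‖v‖ ^ 2 ≤ ℓ G / 2 * ‖v‖ ^ 2 := by
    apply mul_le_mul_of_nonneg_right (by linarith) (sq_nonneg _)
  rw [hφ1, hφ0] at h01
  linarith
end

section
/- Let f: 𝒳 → ℝ be differentiable and (r,ℓ)-smooth on open 𝒳 ⊆ ℝ^d with infimum f* > −∞. Then for any x ∈ 𝒳, setting G = ‖∇f(x)‖ and L = ℓ(G): f(x − (1/L)∇f(x)) ≤ f(x) − ‖∇f(x)‖²/(2L) provided r(G) ≥ G/L, and consequently ‖∇f(x)‖² ≤ 2L·(f(x) − f*). -/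
open Set

theorem reverse_PL_inequality (d : ℕ)
    (X : Set (EuclideanSpace ℝ (Fin d))) (hX : IsOpen X)
    (f : EuclideanSpace ℝ (Fin d) → ℝ)
    (g : EuclideanSpace ℝ (Fin d) → EuclideanSpace ℝ (Fin d))
    (hgrad : ∀ x ∈ X, HasGradientAt f (g x) x)
    (ℓ r : ℝ → ℝ) (hℓmono : Monotone ℓ) (hℓpos : ∀ u : ℝ, 0 ≤ u → 0 < ℓ u)
    (hranti : Antitone r) (hrpos : ∀ u : ℝ, 0 ≤ u → 0 < r u)
    (hball : ∀ x ∈ X, Metric.closedBall x (r ‖g x‖) ⊆ X)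
    (hlip : ∀ x ∈ X, ∀ x₁ ∈ Metric.closedBall x (r ‖g x‖),
      ∀ x₂ ∈ Metric.closedBall x (r ‖g x‖),
        ‖g x₁ - g x₂‖ ≤ ℓ ‖g x‖ * ‖x₁ - x₂‖)
    (fstar : ℝ) (hfstar : IsGLB (f '' X) fstar)
    (x : EuclideanSpace ℝ (Fin d)) (hx : x ∈ X)
    (hr : r ‖g x‖ ≥ ‖g x‖ / ℓ ‖g x‖) :
    f (x - (1 / ℓ ‖g x‖) • g x) ≤ f x - ‖g x‖ ^ 2 / (2 * ℓ ‖g x‖) ∧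
    ‖g x‖ ^ 2 ≤ 2 * ℓ ‖g x‖ * (f x - fstar) := by
  set G : ℝ := ‖g x‖ with hG
  set L : ℝ := ℓ G with hL
  have hLpos : 0 < L := hℓpos G (norm_nonneg _)
  set T : ℝ := 1 / L with hT
  have hTpos : 0 < T := by positivity
  set c : ℝ → EuclideanSpace ℝ (Fin d) := fun t => x - t • g x with hc
  -- points on the segment are in the closed ball
  have hmem : ∀ t ∈ Icc (0:ℝ) T, c t ∈ Metric.closedBall x (r G) := by
    intro t ht
    have hdist : dist (c t) x = t * G := by
      simp [hc, dist_eq_norm, norm_smul, abs_of_nonneg ht.1, hG]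
    rw [Metric.mem_closedBall, hdist]
    calc t * G ≤ T * G := by
          have := ht.2
          nlinarith [norm_nonneg (g x)]
      _ = G / L := by rw [hT]; ring
      _ ≤ r G := hr
  have hmemX : ∀ t ∈ Icc (0:ℝ) T, c t ∈ X := fun t ht => hball x hx (hmem t ht)
  have hxball : x ∈ Metric.closedBall x (r G) :=
    Metric.mem_closedBall_self (le_of_lt (hrpos G (norm_nonneg _)))
  -- φ and its derivative
  set φ : ℝ → ℝ := fun t => f (c t) with hφ
  set φ' : ℝ → ℝ := fun t => inner ℝ (g (c t)) (-(g x)) with hφ'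
  have hderiv : ∀ t ∈ Icc (0:ℝ) T, HasDerivAt φ (φ' t) t := by
    intro t ht
    have hcd : HasDerivAt c (-(g x)) t := by
      have : HasDerivAt (fun t : ℝ => t • g x) ((1:ℝ) • g x) t :=
        (hasDerivAt_id t).smul_const (g x)
      have h2 : HasDerivAt (fun t : ℝ => t • g x) (g x) t := by simpa using this
      exact h2.const_sub x
    have hfd : HasFDerivAt f ((InnerProductSpace.toDual ℝ _) (g (c t))) (c t) :=
      (hgrad (c t) (hmemX t ht))
    have := hfd.comp_hasDerivAt t hcd
    exact this.congr_deriv (by simp [hφ'])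
  -- barrier function
  set B : ℝ → ℝ := fun t => f x - G ^ 2 * t + L * G ^ 2 * t ^ 2 / 2 with hB
  set B' : ℝ → ℝ := fun t => -G ^ 2 + L * G ^ 2 * t with hB'
  have hBd : ∀ t : ℝ, HasDerivAt B (B' t) t := by
    intro t
    have h1 := (((hasDerivAt_const t (f x)).sub ((hasDerivAt_id t).const_mul (G ^ 2))).add
        (((hasDerivAt_pow 2 t).const_mul (L * G ^ 2)).div_const 2))
    convert h1 using 1
    show B' t = _
    rw [hB']
    push_cast
    ring
    all_goals rfl
  -- derivative bound
  have hbound : ∀ t ∈ Ico (0:ℝ) T, φ' t ≤ B' t := by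
    intro t ht
    have htIcc : t ∈ Icc (0:ℝ) T := ⟨ht.1, le_of_lt ht.2⟩
    have hlip' : ‖g (c t) - g x‖ ≤ L * (t * G) := by
      have := hlip x hx (c t) (hmem t htIcc) x hxball
      have hnorm : ‖c t - x‖ = t * G := by
        simp [hc, norm_smul, abs_of_nonneg ht.1, hG]
      rw [hnorm] at this
      exact this
    have hCS : inner ℝ (g (c t) - g x) (-(g x)) ≤ ‖g (c t) - g x‖ * G := by
      calc inner ℝ (g (c t) - g x) (-(g x)) ≤ ‖g (c t) - g x‖ * ‖-(g x)‖ :=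
            real_inner_le_norm _ _
        _ = ‖g (c t) - g x‖ * G := by rw [norm_neg]
    have hsplit : (inner ℝ (g (c t)) (-(g x)) : ℝ) =
        inner ℝ (g (c t) - g x) (-(g x)) + inner ℝ (g x) (-(g x)) := by
      rw [← inner_add_left, sub_add_cancel]
    have hself : (inner ℝ (g x) (-(g x)) : ℝ) = -G ^ 2 := by
      rw [inner_neg_right, real_inner_self_eq_norm_sq]
    have h1 : φ' t ≤ ‖g (c t) - g x‖ * G - G ^ 2 := by
      show (inner ℝ (g (c t)) (-(g x)) : ℝ) ≤ _
      rw [hsplit, hself]; linarith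
    have h2 : ‖g (c t) - g x‖ * G ≤ L * (t * G) * G :=
      mul_le_mul_of_nonneg_right hlip' (norm_nonneg _)
    have h3 : L * (t * G) * G - G ^ 2 = -G ^ 2 + L * G ^ 2 * t := by ring
    show φ' t ≤ -G ^ 2 + L * G ^ 2 * t
    linarith
  -- continuity
  have hφcont : ContinuousOn φ (Icc 0 T) := fun t ht =>
    (hderiv t ht).continuousAt.continuousWithinAt
  have hBcont : ContinuousOn B (Icc 0 T) := fun t _ =>
    (hBd t).continuousAt.continuousWithinAt
  have hstart : φ 0 ≤ B 0 := by simp [hφ, hB, hc]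
  have key : ∀ ⦃t⦄, t ∈ Icc (0:ℝ) T → φ t ≤ B t :=
    image_le_of_deriv_right_le_deriv_boundary hφcont
      (fun t ht => ((hderiv t ⟨ht.1, le_of_lt ht.2⟩).hasDerivWithinAt)) hstart hBcont
      (fun t _ => (hBd t).hasDerivWithinAt) hbound
  have hTmem : T ∈ Icc (0:ℝ) T := ⟨le_of_lt hTpos, le_refl T⟩
  have hmain : f (x - T • g x) ≤ f x - G ^ 2 / (2 * L) := by
    have := key hTmem
    have hBT : B T = f x - G ^ 2 / (2 * L) := by
      rw [hB, hT]; field_simp; ring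
    rw [hBT] at this
    exact this
  refine ⟨hmain, ?_⟩
  have hyX : x - T • g x ∈ X := hmemX T hTmem
  have hfy : fstar ≤ f (x - T • g x) := hfstar.1 ⟨_, hyX, rfl⟩
  have : G ^ 2 / (2 * L) ≤ f x - fstar := by linarith
  calc G ^ 2 = 2 * L * (G ^ 2 / (2 * L)) := by field_simp
    _ ≤ 2 * L * (f x - fstar) := by
        apply mul_le_mul_of_nonneg_left this; positivity
end

section
/- Let f be convex and (r,ℓ)-smooth on an open convex domain 𝒳 ⊆ ℝ^d. Let x ∈ 𝒳 with ‖∇f(x)‖ ≤ G and define x⁺ = x − η∇f(x) with stepsize η ≤ min{2/ℓ(G), r(G)/(2G)}. Then x⁺ ∈ 𝒳 and ‖∇f(x⁺)‖ ≤ ‖∇f(x)‖. -/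
set_option maxHeartbeats 1000000

open Set InnerProductSpace

local notation "⟪" x ", " y "⟫" => @inner ℝ _ _ x y

section AuxGD

variable {E : Type*} [NormedAddCommGroup E] [InnerProductSpace ℝ E] [CompleteSpace E]

private lemma aux_line_hasDerivAt_gd {f : E → ℝ} {gc : E} {y v : E} {t : ℝ}
    (hg : HasGradientAt f gc (y + t • v)) :
    HasDerivAt (fun t : ℝ => f (y + t • v)) ⟪gc, v⟫ t := by
  have hc : HasDerivAt (fun t : ℝ => y + t • v) v t := by
    simpa using ((hasDerivAt_id t).smul_const v).const_add y
  have hF : HasFDerivAt f (toDual ℝ E gc) (y + t • v) := hg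
  have h := hF.comp_hasDerivAt t hc
  exact h

/-- first-order condition for convexity -/
private lemma aux_first_order_gd {X : Set E} (hXconv : Convex ℝ X) {f : E → ℝ}
    (hconv : ConvexOn ℝ X f) {x y gx : E} (hx : x ∈ X) (hy : y ∈ X)
    (hg : HasGradientAt f gx x) : f x + ⟪gx, y - x⟫ ≤ f y := by
  have hmem : ∀ t ∈ Icc (0:ℝ) 1, x + t • (y - x) ∈ X := by
    intro t ht
    have : AffineMap.lineMap x y t ∈ X := by
      apply hXconv.segment_subset hx hy
      rw [segment_eq_image_lineMap]; exact ⟨t, ht, rfl⟩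
    simpa [AffineMap.lineMap_apply, add_comm] using this
  have hconv' : ConvexOn ℝ (Icc (0:ℝ) 1) (fun t : ℝ => f (x + t • (y - x))) := by
    have h1 := (hconv.comp_affineMap (AffineMap.lineMap x y)).subset
      (fun t ht => by simpa [AffineMap.lineMap_apply, add_comm] using hmem t ht)
      (convex_Icc 0 1)
    have e : (fun t : ℝ => f (x + t • (y - x))) = f ∘ AffineMap.lineMap x y := by
      funext t
      simp [AffineMap.lineMap_apply, add_comm]
    rw [e]; exact h1
  have hder : HasDerivAt (fun t : ℝ => f (x + t • (y - x))) ⟪gx, y - x⟫ 0 := by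
    apply aux_line_hasDerivAt_gd
    simpa using hg
  have hs := hconv'.le_slope_of_hasDerivAt (S := Icc (0:ℝ) 1)
    (left_mem_Icc.2 zero_le_one) (right_mem_Icc.2 zero_le_one) zero_lt_one hder
  rw [slope_def_field] at hs
  simp at hs
  linarith

/-- descent lemma on a convex subset where the gradient is `L`-Lipschitz -/
private lemma aux_descent_gd {X s : Set E} (hsX : s ⊆ X) (hs : Convex ℝ s) {f : E → ℝ}
    {g : E → E} (hgrad : ∀ x ∈ X, HasGradientAt f (g x) x) {L : ℝ}
    (hlip : ∀ a ∈ s, ∀ b ∈ s, ‖g a - g b‖ ≤ L * ‖a - b‖) {y z : E}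
    (hy : y ∈ s) (hz : z ∈ s) :
    f z ≤ f y + ⟪g y, z - y⟫ + L / 2 * ‖z - y‖ ^ 2 := by
  set v := z - y with hv
  have hmem : ∀ t ∈ Icc (0:ℝ) 1, y + t • v ∈ s := by
    intro t ht
    have : AffineMap.lineMap y z t ∈ s := by
      apply hs.segment_subset hy hz
      rw [segment_eq_image_lineMap]; exact ⟨t, ht, rfl⟩
    simpa [AffineMap.lineMap_apply, add_comm, hv] using this
  set φ : ℝ → ℝ := fun t => f (y + t • v) - t * ⟪g y, v⟫ - L / 2 * t ^ 2 * ‖v‖ ^ 2 with hφ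
  have hφder : ∀ t ∈ Icc (0:ℝ) 1,
      HasDerivAt φ (⟪g (y + t • v), v⟫ - ⟪g y, v⟫ - L * t * ‖v‖ ^ 2) t := by
    intro t ht
    have h1 : HasDerivAt (fun t : ℝ => f (y + t • v)) ⟪g (y + t • v), v⟫ t :=
      aux_line_hasDerivAt_gd (hgrad _ (hsX (hmem t ht)))
    have h2 : HasDerivAt (fun t : ℝ => t * ⟪g y, v⟫) ⟪g y, v⟫ t := by
      simpa using (hasDerivAt_id t).mul_const ⟪g y, v⟫
    have h3 : HasDerivAt (fun t : ℝ => L / 2 * t ^ 2 * ‖v‖ ^ 2) (L * t * ‖v‖ ^ 2) t := by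
      have := ((hasDerivAt_pow 2 t).const_mul (L / 2)).mul_const (‖v‖ ^ 2)
      exact this.congr_deriv (by ring)
    exact (h1.sub h2).sub h3
  have hanti : AntitoneOn φ (Icc (0:ℝ) 1) := by
    apply antitoneOn_of_deriv_nonpos (convex_Icc 0 1)
    · exact fun t ht => ((hφder t ht).continuousAt).continuousWithinAt
    · rw [interior_Icc]
      exact fun t ht =>
        ((hφder t (Ioo_subset_Icc_self ht)).differentiableAt).differentiableWithinAt
    · rw [interior_Icc]
      intro t ht
      rw [(hφder t (Ioo_subset_Icc_self ht)).deriv]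
      have hinner : ⟪g (y + t • v), v⟫ - ⟪g y, v⟫ = ⟪g (y + t • v) - g y, v⟫ := by
        rw [inner_sub_left]
      have hb1 : ⟪g (y + t • v) - g y, v⟫ ≤ ‖g (y + t • v) - g y‖ * ‖v‖ :=
        real_inner_le_norm _ _
      have hb2 : ‖g (y + t • v) - g y‖ ≤ L * (t * ‖v‖) := by
        have := hlip _ (hmem t (Ioo_subset_Icc_self ht)) y hy
        simpa [norm_smul, abs_of_nonneg ht.1.le] using this
      have hvn : (0:ℝ) ≤ ‖v‖ := norm_nonneg _
      nlinarith [norm_nonneg (g (y + t • v) - g y)]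
  have h01 := hanti (left_mem_Icc.2 zero_le_one) (right_mem_Icc.2 zero_le_one) zero_le_one
  simp only [hφ] at h01
  simp at h01
  have hz1 : y + v = z := by simp [hv]
  rw [hz1] at h01
  linarith [h01]

end AuxGD

theorem gd_step_gradient_nonincreasing (d : ℕ)
    (X : Set (EuclideanSpace ℝ (Fin d))) (hX : IsOpen X) (hXconv : Convex ℝ X)
    (f : EuclideanSpace ℝ (Fin d) → ℝ) (hconv : ConvexOn ℝ X f)
    (g : EuclideanSpace ℝ (Fin d) → EuclideanSpace ℝ (Fin d))
    (hgrad : ∀ x ∈ X, HasGradientAt f (g x) x)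
    (ℓ r : ℝ → ℝ) (hℓmono : Monotone ℓ) (hℓpos : ∀ u : ℝ, 0 ≤ u → 0 < ℓ u)
    (hranti : Antitone r) (hrpos : ∀ u : ℝ, 0 ≤ u → 0 < r u)
    (hball : ∀ x ∈ X, Metric.closedBall x (r ‖g x‖) ⊆ X)
    (hlip : ∀ x ∈ X, ∀ x₁ ∈ Metric.closedBall x (r ‖g x‖),
      ∀ x₂ ∈ Metric.closedBall x (r ‖g x‖),
        ‖g x₁ - g x₂‖ ≤ ℓ ‖g x‖ * ‖x₁ - x₂‖)
    (x : EuclideanSpace ℝ (Fin d)) (hx : x ∈ X) (G : ℝ) (hG : ‖g x‖ ≤ G)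
    (η : ℝ) (hη0 : 0 < η) (hη : η ≤ min (2 / ℓ G) (r G / (2 * G))) :
    x - η • g x ∈ X ∧ ‖g (x - η • g x)‖ ≤ ‖g x‖ := by
  by_cases ha : g x = 0
  · constructor
    · simpa [ha] using hx
    · simp [ha]
  -- basic positivity facts
  have hu : (0:ℝ) < ‖g x‖ := norm_pos_iff.2 ha
  have hG0 : (0:ℝ) < G := lt_of_lt_of_le hu hG
  have hη1 : η ≤ 2 / ℓ G := le_trans hη (min_le_left _ _)
  have hη2 : η ≤ r G / (2 * G) := le_trans hη (min_le_right _ _)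
  have hLG : (0:ℝ) < ℓ G := hℓpos G hG0.le
  set L : ℝ := ℓ ‖g x‖ with hLdef
  have hL : (0:ℝ) < L := hℓpos _ (norm_nonneg _)
  have hLle : L ≤ ℓ G := hℓmono hG
  have hηL : η * L ≤ 2 := by
    have h1 : η * ℓ G ≤ 2 := by
      rw [le_div_iff₀ hLG] at hη1; linarith
    nlinarith
  have hrG : (0:ℝ) < r G := hrpos G hG0.le
  have hru : r G ≤ r ‖g x‖ := hranti hG
  have hηu : η * ‖g x‖ ≤ r G / 2 := by
    have h1 : η * (2 * G) ≤ r G := by rw [le_div_iff₀ (by positivity)] at hη2; linarith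
    nlinarith
  -- the ball
  set B := Metric.closedBall x (r ‖g x‖) with hB
  have hBX : B ⊆ X := hball x hx
  have hBconv : Convex ℝ B := convex_closedBall _ _
  have hlipB : ∀ a ∈ B, ∀ b ∈ B, ‖g a - g b‖ ≤ L * ‖a - b‖ := hlip x hx
  have hxB : x ∈ B := Metric.mem_closedBall_self (by linarith)
  -- x⁺
  set xp := x - η • g x with hxp
  have hxp_sub : xp - x = -(η • g x) := by rw [hxp]; abel
  have hxpnorm : ‖xp - x‖ = η * ‖g x‖ := by
    rw [hxp_sub, norm_neg, norm_smul, Real.norm_eq_abs, abs_of_pos hη0]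
  have hxpB : xp ∈ B := by
    rw [hB, Metric.mem_closedBall, dist_eq_norm, hxpnorm]; linarith
  have hxpX : xp ∈ X := hBX hxpB
  refine ⟨hxpX, ?_⟩
  -- δ and auxiliary points
  set δ := g xp - g x with hδdef
  have hδ : ‖δ‖ ≤ L * (η * ‖g x‖) := by
    have := hlipB xp hxpB x hxB
    rwa [hxpnorm] at this
  set w := xp - L⁻¹ • δ with hw
  set w' := x + L⁻¹ • δ with hw'
  have hinvnorm : ‖L⁻¹ • δ‖ ≤ η * ‖g x‖ := by
    rw [norm_smul, Real.norm_eq_abs, abs_of_pos (by positivity)]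
    rw [inv_mul_le_iff₀ hL]
    linarith [hδ]
  have hwB : w ∈ B := by
    rw [hB, Metric.mem_closedBall, dist_eq_norm]
    have : w - x = (xp - x) - L⁻¹ • δ := by rw [hw]; abel
    rw [this]
    calc ‖(xp - x) - L⁻¹ • δ‖ ≤ ‖xp - x‖ + ‖L⁻¹ • δ‖ := norm_sub_le _ _
      _ ≤ r ‖g x‖ := by rw [hxpnorm]; linarith
  have hw'B : w' ∈ B := by
    rw [hB, Metric.mem_closedBall, dist_eq_norm]
    have : w' - x = L⁻¹ • δ := by rw [hw']; abel
    rw [this]; linarith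
  -- the four inequalities
  have h1 := aux_first_order_gd hXconv hconv hx (hBX hwB) (hgrad x hx)
  have h2 := aux_descent_gd hBX hBconv hgrad hlipB hxpB hwB
  have h3 := aux_first_order_gd hXconv hconv hxpX (hBX hw'B) (hgrad xp hxpX)
  have h4 := aux_descent_gd hBX hBconv hgrad hlipB hxB hw'B
  -- rewrite all the vector differences
  have ew1 : w - x = -(η • g x) - L⁻¹ • δ := by rw [hw, hxp]; abel
  have ew2 : w - xp = -(L⁻¹ • δ) := by rw [hw]; abel
  have ew3 : w' - xp = η • g x + L⁻¹ • δ := by rw [hw', hxp]; abel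
  have ew4 : w' - x = L⁻¹ • δ := by rw [hw']; abel
  rw [ew1] at h1
  rw [ew2] at h2
  rw [ew3] at h3
  rw [ew4] at h4
  -- inner product expansions
  have e1 : ⟪g x, -(η • g x) - L⁻¹ • δ⟫ = -(η * ⟪g x, g x⟫) - L⁻¹ * ⟪g x, δ⟫ := by
    rw [inner_sub_right, inner_neg_right, real_inner_smul_right, real_inner_smul_right]
  have e2 : ⟪g xp, -(L⁻¹ • δ)⟫ = -(L⁻¹ * ⟪g xp, δ⟫) := by
    rw [inner_neg_right, real_inner_smul_right]
  have e3 : ⟪g xp, η • g x + L⁻¹ • δ⟫ = η * ⟪g xp, g x⟫ + L⁻¹ * ⟪g xp, δ⟫ := by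
    rw [inner_add_right, real_inner_smul_right, real_inner_smul_right]
  have e4 : ⟪g x, L⁻¹ • δ⟫ = L⁻¹ * ⟪g x, δ⟫ := real_inner_smul_right _ _ _
  rw [e1] at h1; rw [e2] at h2; rw [e3] at h3; rw [e4] at h4
  have en : ‖-(L⁻¹ • δ)‖ ^ 2 = (L⁻¹ * ‖δ‖) ^ 2 := by
    rw [norm_neg, norm_smul, Real.norm_eq_abs, abs_of_pos (by positivity)]
  rw [en] at h2
  have en' : ‖L⁻¹ • δ‖ ^ 2 = (L⁻¹ * ‖δ‖) ^ 2 := by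
    rw [norm_smul, Real.norm_eq_abs, abs_of_pos (by positivity)]
  rw [en'] at h4
  -- identities
  have id1 : ⟪g xp, δ⟫ - ⟪g x, δ⟫ = ‖δ‖ ^ 2 := by
    rw [← inner_sub_left, ← hδdef, real_inner_self_eq_norm_sq]
  have id2 : ⟪g xp, g x⟫ - ⟪g x, g x⟫ = ⟪g x, δ⟫ := by
    rw [← inner_sub_left, ← hδdef, real_inner_comm]
  have iLL : L / 2 * (L⁻¹ * ‖δ‖) ^ 2 = L⁻¹ / 2 * ‖δ‖ ^ 2 := by
    field_simp
  rw [iLL] at h2 h4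
  -- combine: η * ⟪g x, δ⟫ ≤ - L⁻¹ * ‖δ‖²
  have id1' : L⁻¹ * ⟪g xp, δ⟫ = L⁻¹ * ⟪g x, δ⟫ + L⁻¹ * ‖δ‖ ^ 2 := by
    rw [← id1]; ring
  have id2' : η * ⟪g xp, g x⟫ = η * ⟪g x, g x⟫ + η * ⟪g x, δ⟫ := by
    rw [← id2]; ring
  have hkey : η * ⟪g x, δ⟫ ≤ -(L⁻¹ * ‖δ‖ ^ 2) := by linarith
  have hkey2 : η * L * ⟪g x, δ⟫ ≤ -‖δ‖ ^ 2 := by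
    have h5 := mul_le_mul_of_nonneg_left hkey hL.le
    have hLL : L * (L⁻¹ * ‖δ‖ ^ 2) = ‖δ‖ ^ 2 := by field_simp
    linarith
  -- conclude
  have hq : ⟪g x, δ⟫ ≤ 0 := by
    have h5 : η * L * ⟪g x, δ⟫ ≤ η * L * 0 := by
      rw [mul_zero]
      exact le_trans hkey2 (by nlinarith [sq_nonneg ‖δ‖])
    exact le_of_mul_le_mul_left h5 (mul_pos hη0 hL)
  have hsq : ‖g xp‖ ^ 2 ≤ ‖g x‖ ^ 2 := by
    have hge : g x + δ = g xp := by rw [hδdef]; abel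
    have hexp := norm_add_sq_real (g x) δ
    rw [hge] at hexp
    have hmul : (0:ℝ) ≤ (2 - η * L) * (-⟪g x, δ⟫) :=
      mul_nonneg (by linarith) (by linarith)
    linarith
  nlinarith [norm_nonneg (g xp), norm_nonneg (g x), hsq]
end

section
/- Let f: 𝒳 → ℝ be convex, (r,ℓ)-smooth on open convex 𝒳 ⊆ ℝ^d, with a global minimizer x* ∈ 𝒳. Let G = ‖∇f(x_0)‖, L = ℓ(G), and run gradient descent x_{t+1} = x_t − η∇f(x_t) with η ≤ min{1/L, r(G)/(2G)}. Then for all t ≥ 0, ‖∇f(x_t)‖ ≤ G, and f(x_T) − f(x*) ≤ ‖x_0 − x*‖²/(2ηT) for all T ≥ 1. -/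
set_option maxHeartbeats 1000000

open RealInnerProductSpace Set

variable {E : Type*} [NormedAddCommGroup E] [InnerProductSpace ℝ E] [CompleteSpace E]

lemma aux_line_hasDerivAt {f : E → ℝ} {G : E} (a v : E) {t : ℝ}
    (h : HasGradientAt f G (a + t • v)) :
    HasDerivAt (fun s : ℝ => f (a + s • v)) ⟪G, v⟫ t := by
  have hline : HasDerivAt (fun s : ℝ => a + s • v) v t := by
    simpa using ((hasDerivAt_id t).smul_const v).const_add a
  have h2 := (h.hasFDerivAt).comp_hasDerivAt t hline
  exact h2

lemma aux_descent {f : E → ℝ} {g : E → E} {L : ℝ} {y z : E}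
    (hdiff : ∀ w ∈ segment ℝ y z, HasGradientAt f (g w) w)
    (hlip : ∀ w ∈ segment ℝ y z, ‖g w - g y‖ ≤ L * ‖w - y‖) :
    f z ≤ f y + ⟪g y, z - y⟫ + L / 2 * ‖z - y‖ ^ 2 := by
  set v := z - y with hv
  set F : ℝ → ℝ := fun t => f (y + t • v) - t * ⟪g y, v⟫ - L * t ^ 2 / 2 * ‖v‖ ^ 2 with hF
  have hmem : ∀ t ∈ Set.Icc (0:ℝ) 1, y + t • v ∈ segment ℝ y z := by
    intro t ht
    rw [segment_eq_image']
    exact ⟨t, ht, rfl⟩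
  have hderiv : ∀ t ∈ Set.Icc (0:ℝ) 1,
      HasDerivAt F (⟪g (y + t • v), v⟫ - ⟪g y, v⟫ - L * t * ‖v‖ ^ 2) t := by
    intro t ht
    have h1 := aux_line_hasDerivAt y v (hdiff _ (hmem t ht))
    have h2 : HasDerivAt (fun s : ℝ => s * ⟪g y, v⟫) ⟪g y, v⟫ t := by
      simpa using (hasDerivAt_id t).mul_const ⟪g y, v⟫
    have h3 : HasDerivAt (fun s : ℝ => L * s ^ 2 / 2 * ‖v‖ ^ 2) (L * t * ‖v‖ ^ 2) t := by
      have h4 : HasDerivAt (fun s : ℝ => s ^ 2) (2 * t) t := by simpa using hasDerivAt_pow 2 t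
      have h5 := ((h4.const_mul L).div_const 2).mul_const (‖v‖ ^ 2)
      have e : L * t * ‖v‖ ^ 2 = L * (2 * t) / 2 * ‖v‖ ^ 2 := by ring
      rw [e]
      exact h5
    exact (h1.sub h2).sub h3
  have hanti : AntitoneOn F (Set.Icc 0 1) := by
    apply antitoneOn_of_deriv_nonpos (convex_Icc 0 1)
    · intro t ht
      exact (hderiv t ht).continuousAt.continuousWithinAt
    · intro t ht
      rw [interior_Icc] at ht
      exact (hderiv t (Set.mem_Icc_of_Ioo ht)).differentiableAt.differentiableWithinAt
    · intro t ht
      rw [interior_Icc] at ht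
      rw [(hderiv t (Set.mem_Icc_of_Ioo ht)).deriv]
      have hw := hlip _ (hmem t (Set.mem_Icc_of_Ioo ht))
      have hwy : ‖(y + t • v) - y‖ = t * ‖v‖ := by
        simp [norm_smul, abs_of_pos ht.1]
      rw [hwy] at hw
      have hinner : ⟪g (y + t • v) - g y, v⟫ ≤ L * t * ‖v‖ ^ 2 := by
        calc ⟪g (y + t • v) - g y, v⟫ ≤ ‖g (y + t • v) - g y‖ * ‖v‖ := real_inner_le_norm _ _
          _ ≤ (L * (t * ‖v‖)) * ‖v‖ := mul_le_mul_of_nonneg_right hw (norm_nonneg _)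
          _ = L * t * ‖v‖ ^ 2 := by ring
      rw [inner_sub_left] at hinner
      linarith
  have h01 := hanti (Set.left_mem_Icc.2 zero_le_one) (Set.right_mem_Icc.2 zero_le_one) zero_le_one
  have e0 : F 0 = f y := by simp [hF]
  have e1 : F 1 = f z - ⟪g y, v⟫ - L / 2 * ‖v‖ ^ 2 := by
    have h2 : y + v = z := by simp [hv]
    simp [hF, h2]
  rw [e0, e1] at h01
  linarith

lemma aux_grad_lower {X : Set E} {f : E → ℝ}
    (hconv : ConvexOn ℝ X f) {a y G : E} (ha : a ∈ X) (hy : y ∈ X)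
    (hg : HasGradientAt f G a) : f a + ⟪G, y - a⟫ ≤ f y := by
  have hd : HasDerivAt (fun s : ℝ => f (a + s • (y - a))) ⟪G, y - a⟫ 0 := by
    apply aux_line_hasDerivAt
    simpa using hg
  have hs := hasDerivAt_iff_tendsto_slope.mp hd
  have hs' : Filter.Tendsto (slope (fun s : ℝ => f (a + s • (y - a))) 0) (nhdsWithin 0 (Set.Ioi 0))
      (nhds ⟪G, y - a⟫) :=
    hs.mono_left (nhdsWithin_mono 0 (fun t ht => ne_of_gt ht))
  have key : ∀ᶠ t in nhdsWithin (0:ℝ) (Set.Ioi 0),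
      slope (fun s : ℝ => f (a + s • (y - a))) 0 t ≤ f y - f a := by
    filter_upwards [Ioc_mem_nhdsGT_of_mem (Set.mem_Ico.2 ⟨le_refl (0:ℝ), zero_lt_one⟩)] with t ht
    have hrep : a + t • (y - a) = (1 - t) • a + t • y := by
      rw [smul_sub, sub_smul, one_smul]; abel
    have hconvpt : f (a + t • (y - a)) ≤ (1 - t) * f a + t * f y := by
      rw [hrep]
      exact hconv.2 ha hy (by linarith [ht.2] : (0:ℝ) ≤ 1 - t) (le_of_lt ht.1) (by ring)
    have h0 : a + (0:ℝ) • (y - a) = a := by simp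
    simp only [slope_def_field, h0, sub_zero]
    rw [div_le_iff₀ ht.1]
    linarith
  have := le_of_tendsto hs' key
  linarith

lemma aux_scalar {L η p q s : ℝ} (hLpos : 0 < L) (hη0 : 0 < η) (hLη : L * η ≤ 1)
    (hunn : 0 ≤ s - 2 * q + p) (hD2 : s ≤ 2 * L * η * (p - q) + 2 * q - p) : s ≤ p := by
  have hpq : q ≤ p := by nlinarith [mul_pos hLpos hη0]
  nlinarith [mul_nonneg (sub_nonneg.2 hLη) (sub_nonneg.2 hpq)]

lemma aux_sq_le {a b : ℝ} (ha : 0 ≤ a) (hb : 0 ≤ b) (h : a ^ 2 ≤ b ^ 2) : a ≤ b := by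
  nlinarith

theorem gd_convex_convergence (d : ℕ)
    (X : Set (EuclideanSpace ℝ (Fin d))) (hX : IsOpen X) (hXconv : Convex ℝ X)
    (f : EuclideanSpace ℝ (Fin d) → ℝ) (hconv : ConvexOn ℝ X f)
    (g : EuclideanSpace ℝ (Fin d) → EuclideanSpace ℝ (Fin d))
    (hgrad : ∀ x ∈ X, HasGradientAt f (g x) x)
    (ℓ r : ℝ → ℝ) (hℓmono : Monotone ℓ) (hℓpos : ∀ u : ℝ, 0 ≤ u → 0 < ℓ u)
    (hranti : Antitone r) (hrpos : ∀ u : ℝ, 0 ≤ u → 0 < r u)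
    (hball : ∀ x ∈ X, Metric.closedBall x (r ‖g x‖) ⊆ X)
    (hlip : ∀ x ∈ X, ∀ x₁ ∈ Metric.closedBall x (r ‖g x‖),
      ∀ x₂ ∈ Metric.closedBall x (r ‖g x‖),
        ‖g x₁ - g x₂‖ ≤ ℓ ‖g x‖ * ‖x₁ - x₂‖)
    (xstar : EuclideanSpace ℝ (Fin d)) (hxstar : xstar ∈ X)
    (hmin : ∀ y ∈ X, f xstar ≤ f y)
    (x : ℕ → EuclideanSpace ℝ (Fin d)) (hx0 : x 0 ∈ X)
    (η : ℝ) (hη0 : 0 < η)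
    (hη : η ≤ min (1 / ℓ ‖g (x 0)‖) (r ‖g (x 0)‖ / (2 * ‖g (x 0)‖)))
    (hupdate : ∀ t : ℕ, x (t + 1) = x t - η • g (x t)) :
    (∀ t : ℕ, x t ∈ X ∧ ‖g (x t)‖ ≤ ‖g (x 0)‖) ∧
    ∀ T : ℕ, 1 ≤ T → f (x T) - f xstar ≤ ‖x 0 - xstar‖ ^ 2 / (2 * η * T) := by
  set G := ‖g (x 0)‖ with hGdef
  have hGnn : 0 ≤ G := norm_nonneg _
  set L := ℓ G with hLdef
  have hLpos : 0 < L := hℓpos G hGnn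
  have hL0 : L ≠ 0 := ne_of_gt hLpos
  have hη1 : η ≤ 1 / L := le_trans hη (min_le_left _ _)
  have hη2 : η ≤ r G / (2 * G) := le_trans hη (min_le_right _ _)
  rcases eq_or_lt_of_le hGnn with hG0 | hGpos
  · exfalso
    rw [← hG0] at hη2
    norm_num at hη2
    linarith
  have hηG : η * G ≤ r G / 2 := by
    have h := (le_div_iff₀ (by positivity : (0:ℝ) < 2 * G)).mp hη2
    nlinarith
  have hLη : L * η ≤ 1 := by
    have h := (le_div_iff₀ hLpos).mp hη1
    linarith
  have hrG : 0 < r G := hrpos G hGnn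
  -- the one-step lemma
  have step : ∀ a : EuclideanSpace ℝ (Fin d), a ∈ X → ‖g a‖ ≤ G →
      (a - η • g a ∈ X ∧ ‖g (a - η • g a)‖ ≤ ‖g a‖) ∧
      f (a - η • g a) ≤ f a - η / 2 * ‖g a‖ ^ 2 := by
    intro a haX haG
    set b := a - η • g a with hbdef
    have hLa : ℓ ‖g a‖ ≤ L := hℓmono haG
    have hLa0 : 0 < ℓ ‖g a‖ := hℓpos _ (norm_nonneg _)
    have hra : r G ≤ r ‖g a‖ := hranti haG
    have hba' : b - a = -(η • g a) := by rw [hbdef]; abel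
    have hba : ‖b - a‖ = η * ‖g a‖ := by
      rw [hba', norm_neg, norm_smul, Real.norm_eq_abs, abs_of_pos hη0]
    have haB : a ∈ Metric.closedBall a (r ‖g a‖) :=
      Metric.mem_closedBall_self (by linarith)
    have hbB : b ∈ Metric.closedBall a (r ‖g a‖) := by
      rw [Metric.mem_closedBall, dist_eq_norm, hba]
      have h1 : η * ‖g a‖ ≤ η * G := mul_le_mul_of_nonneg_left haG hη0.le
      linarith
    have hBX := hball a haX
    have hbX : b ∈ X := hBX hbB
    have hsegab : segment ℝ a b ⊆ Metric.closedBall a (r ‖g a‖) :=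
      (convex_closedBall _ _).segment_subset haB hbB
    -- descent step a → b
    have hdesc1 : f b ≤ f a + ⟪g a, b - a⟫ + L / 2 * ‖b - a‖ ^ 2 := by
      apply aux_descent
      · intro w hw; exact hgrad w (hBX (hsegab hw))
      · intro w hw
        have h := hlip a haX w (hsegab hw) a haB
        calc ‖g w - g a‖ ≤ ℓ ‖g a‖ * ‖w - a‖ := h
          _ ≤ L * ‖w - a‖ := mul_le_mul_of_nonneg_right hLa (norm_nonneg _)
    have e5 : ⟪g a, b - a⟫ = -(η * ‖g a‖ ^ 2) := by
      rw [hba', inner_neg_right, real_inner_smul_right, real_inner_self_eq_norm_sq]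
    have hfdec : f b ≤ f a - η / 2 * ‖g a‖ ^ 2 := by
      rw [e5, hba] at hdesc1
      nlinarith [mul_le_mul_of_nonneg_right hLη (mul_nonneg hη0.le (sq_nonneg ‖g a‖)),
        sq_nonneg ‖g a‖]
    -- gradient norm decrease via cocoercivity
    set u := g b - g a with hudef
    set z := b - (1 / L) • u with hzdef
    have hu_le : ‖u‖ ≤ L * (η * ‖g a‖) := by
      have h := hlip a haX b hbB a haB
      rw [hba] at h
      calc ‖u‖ ≤ ℓ ‖g a‖ * (η * ‖g a‖) := h
        _ ≤ L * (η * ‖g a‖) :=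
          mul_le_mul_of_nonneg_right hLa (by positivity)
    have hinvu : (1 / L) * ‖u‖ ≤ η * ‖g a‖ := by
      calc (1 / L) * ‖u‖ ≤ (1 / L) * (L * (η * ‖g a‖)) :=
            mul_le_mul_of_nonneg_left hu_le (by positivity)
        _ = η * ‖g a‖ := by field_simp
    have hza : z - a = -(η • g a) - (1 / L) • u := by
      rw [hzdef, hbdef]; abel
    have hzB : z ∈ Metric.closedBall a (r ‖g a‖) := by
      rw [Metric.mem_closedBall, dist_eq_norm, hza]
      have h1 : ‖-(η • g a) - (1 / L) • u‖ ≤ ‖-(η • g a)‖ + ‖(1 / L) • u‖ :=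
        norm_sub_le _ _
      rw [norm_neg, norm_smul, norm_smul, Real.norm_eq_abs, Real.norm_eq_abs,
        abs_of_pos hη0, abs_of_pos (by positivity : (0:ℝ) < 1 / L)] at h1
      have h2 : η * ‖g a‖ ≤ η * G := mul_le_mul_of_nonneg_left haG hη0.le
      linarith
    have hzX : z ∈ X := hBX hzB
    have hsegbz : segment ℝ b z ⊆ Metric.closedBall a (r ‖g a‖) :=
      (convex_closedBall _ _).segment_subset hbB hzB
    have hdesc2 : f z ≤ f b + ⟪g b, z - b⟫ + L / 2 * ‖z - b‖ ^ 2 := by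
      apply aux_descent
      · intro w hw; exact hgrad w (hBX (hsegbz hw))
      · intro w hw
        have h := hlip a haX w (hsegbz hw) b hbB
        calc ‖g w - g b‖ ≤ ℓ ‖g a‖ * ‖w - b‖ := h
          _ ≤ L * ‖w - b‖ := mul_le_mul_of_nonneg_right hLa (norm_nonneg _)
    have hlow1 : f a + ⟪g a, z - a⟫ ≤ f z :=
      aux_grad_lower hconv haX hzX (hgrad a haX)
    have hlow2 : f b + ⟪g b, a - b⟫ ≤ f a :=
      aux_grad_lower hconv hbX haX (hgrad b hbX)
    -- scalar abbreviations
    set p := ‖g a‖ ^ 2 with hpdef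
    set s := ‖g b‖ ^ 2 with hsdef
    set q := ⟪g a, g b⟫ with hqdef
    have hqcomm : ⟪g b, g a⟫ = q := real_inner_comm _ _
    have e1 : ⟪g a, z - a⟫ = -(η * p) - (1 / L) * (q - p) := by
      rw [hza, hudef, inner_sub_right, inner_neg_right, real_inner_smul_right,
        real_inner_smul_right, inner_sub_right, real_inner_self_eq_norm_sq]
    have hzb : z - b = -((1 / L) • u) := by rw [hzdef]; abel
    have e2 : ⟪g b, z - b⟫ = -((1 / L) * (s - q)) := by
      rw [hzb, inner_neg_right, real_inner_smul_right, hudef, inner_sub_right,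
        real_inner_self_eq_norm_sq, hqcomm, ← hsdef]
    have hu2 : ‖u‖ ^ 2 = s - 2 * q + p := by
      rw [hudef, norm_sub_sq_real, hqcomm, ← hsdef, ← hpdef]
    have e3 : ‖z - b‖ ^ 2 = (1 / L) ^ 2 * (s - 2 * q + p) := by
      rw [hzb, norm_neg, norm_smul, Real.norm_eq_abs,
        abs_of_pos (by positivity : (0:ℝ) < 1 / L), mul_pow, hu2]
    have e4 : ⟪g b, a - b⟫ = η * q := by
      have hab : a - b = η • g a := by rw [hbdef]; abel
      rw [hab, real_inner_smul_right, hqcomm]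
    have e3' : L / 2 * ((1 / L) ^ 2 * (s - 2 * q + p)) = 1 / (2 * L) * (s - 2 * q + p) := by
      field_simp
    rw [e1] at hlow1
    rw [e2, e3, e3'] at hdesc2
    rw [e4] at hlow2
    have hunn : 0 ≤ s - 2 * q + p := by rw [← hu2]; positivity
    have D : -(η * p) - (1 / L) * (q - p) ≤
        -(η * q) - (1 / L) * (s - q) + 1 / (2 * L) * (s - 2 * q + p) := by
      linarith
    have D2 : s ≤ 2 * L * η * (p - q) + 2 * q - p := by
      have h := mul_le_mul_of_nonneg_left D (by positivity : (0:ℝ) ≤ 2 * L)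
      have e6 : 2 * L * (-(η * p) - (1 / L) * (q - p)) = -(2 * L * η * p) - 2 * q + 2 * p := by
        field_simp
        ring
      have e7 : 2 * L * (-(η * q) - (1 / L) * (s - q) + 1 / (2 * L) * (s - 2 * q + p)) =
          -(2 * L * η * q) - s + p := by
        field_simp
        ring
      rw [e6, e7] at h
      linarith
    have hsp : s ≤ p := aux_scalar hLpos hη0 hLη hunn D2
    rw [hsdef, hpdef] at hsp
    have hnorm : ‖g b‖ ≤ ‖g a‖ := aux_sq_le (norm_nonneg _) (norm_nonneg _) hsp
    exact ⟨⟨hbX, hnorm⟩, hfdec⟩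
  -- induction: iterates stay in X with bounded gradients
  have main1 : ∀ t : ℕ, x t ∈ X ∧ ‖g (x t)‖ ≤ G := by
    intro t
    induction t with
    | zero => exact ⟨hx0, le_refl _⟩
    | succ n ih =>
      have h := step (x n) ih.1 ih.2
      rw [hupdate n]
      exact ⟨h.1.1, le_trans h.1.2 ih.2⟩
  have hdescseq : ∀ t : ℕ, f (x (t + 1)) ≤ f (x t) - η / 2 * ‖g (x t)‖ ^ 2 := by
    intro t
    rw [hupdate t]
    exact (step (x t) (main1 t).1 (main1 t).2).2
  have hmono : ∀ t : ℕ, f (x (t + 1)) ≤ f (x t) := by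
    intro t
    have h := hdescseq t
    nlinarith [sq_nonneg ‖g (x t)‖]
  have hdist : ∀ t : ℕ,
      ‖x (t + 1) - xstar‖ ^ 2 ≤ ‖x t - xstar‖ ^ 2 - 2 * η * (f (x (t + 1)) - f xstar) := by
    intro t
    have hlow := aux_grad_lower hconv (main1 t).1 hxstar (hgrad _ (main1 t).1)
    have hinner_ge : f (x t) - f xstar ≤ ⟪g (x t), x t - xstar⟫ := by
      have hns : xstar - x t = -(x t - xstar) := by abel
      rw [hns, inner_neg_right] at hlow
      linarith
    have hexp : ‖x (t + 1) - xstar‖ ^ 2 =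
        ‖x t - xstar‖ ^ 2 - 2 * η * ⟪g (x t), x t - xstar⟫ + η ^ 2 * ‖g (x t)‖ ^ 2 := by
      rw [hupdate t]
      have hre : x t - η • g (x t) - xstar = (x t - xstar) - η • g (x t) := by abel
      rw [hre, norm_sub_sq_real, real_inner_smul_right, norm_smul, Real.norm_eq_abs,
        abs_of_pos hη0, real_inner_comm]
      ring
    have hstep := hdescseq t
    have k1 := mul_le_mul_of_nonneg_left hinner_ge (by positivity : (0:ℝ) ≤ 2 * η)
    have k2 := mul_le_mul_of_nonneg_left hstep (by positivity : (0:ℝ) ≤ 2 * η)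
    nlinarith [hexp]
  have hsum : ∀ T : ℕ, (T : ℝ) * (2 * η * (f (x T) - f xstar)) ≤
      ‖x 0 - xstar‖ ^ 2 - ‖x T - xstar‖ ^ 2 := by
    intro T
    induction T with
    | zero => simp
    | succ n ih =>
      have h1 := hdist n
      have h2 : f (x (n + 1)) ≤ f (x n) := hmono n
      have h3 : f xstar ≤ f (x (n + 1)) := hmin _ (main1 (n + 1)).1
      have h4 : (n : ℝ) * (2 * η * (f (x (n + 1)) - f xstar)) ≤
          (n : ℝ) * (2 * η * (f (x n) - f xstar)) := by
        apply mul_le_mul_of_nonneg_left _ (Nat.cast_nonneg n)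
        nlinarith
      push_cast
      nlinarith [ih]
  refine ⟨main1, fun T hT => ?_⟩
  have hTpos : (0:ℝ) < (T : ℝ) := by exact_mod_cast Nat.lt_of_lt_of_le Nat.zero_lt_one hT
  rw [le_div_iff₀ (by positivity : (0:ℝ) < 2 * η * T)]
  have h := hsum T
  nlinarith [sq_nonneg ‖x T - xstar‖]
end

section
/- Let f: 𝒳 → ℝ be μ-strongly convex with μ > 0 and (r,ℓ)-smooth on open convex 𝒳 ⊆ ℝ^d, with global minimizer x*. Let G = ‖∇f(x_0)‖, L = ℓ(G), and run gradient descent x_{t+1} = x_t − η∇f(x_t) with η ≤ min{1/L, r(G)/(2G)} and ημ < 1. Then for all T ≥ 1, f(x_T) − f(x*) ≤ [μ(1−ημ)^T / (2(1−(1−ημ)^T))]·‖x_0 − x*‖². -/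
open RealInnerProductSpace

open Set in
lemma descent_lemma_aux {E : Type*} [NormedAddCommGroup E] [InnerProductSpace ℝ E]
    [CompleteSpace E]
    (f : E → ℝ) (g : E → E) (L : ℝ) (a v : E)
    (hd : ∀ s ∈ Icc (0:ℝ) 1, HasGradientAt f (g (a + s • v)) (a + s • v))
    (hlip : ∀ s ∈ Icc (0:ℝ) 1, ‖g (a + s • v) - g a‖ ≤ L * (s * ‖v‖)) :
    f (a + v) ≤ f a + ⟪g a, v⟫ + L / 2 * ‖v‖ ^ 2 := by
  set ψ : ℝ → ℝ := fun s => f (a + s • v) - s * ⟪g a, v⟫ - s ^ 2 * (L / 2 * ‖v‖ ^ 2) with hψ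
  have hderiv : ∀ s ∈ Icc (0:ℝ) 1,
      HasDerivAt ψ (⟪g (a + s • v), v⟫ - ⟪g a, v⟫ - 2 * s * (L / 2 * ‖v‖ ^ 2)) s := by
    intro s hs
    have h1 : HasDerivAt (fun u : ℝ => a + u • v) v s := by
      simpa using ((hasDerivAt_id s).smul_const v).const_add a
    have h2 : HasDerivAt (fun u : ℝ => f (a + u • v)) ⟪g (a + s • v), v⟫ s := by
      have := (hd s hs).hasFDerivAt.comp_hasDerivAt s h1
      simpa [InnerProductSpace.toDual_apply_apply, Function.comp_def] using this
    have h3 : HasDerivAt (fun u : ℝ => u * ⟪g a, v⟫) ⟪g a, v⟫ s := hasDerivAt_mul_const _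
    have h4 : HasDerivAt (fun u : ℝ => u ^ 2 * (L / 2 * ‖v‖ ^ 2))
        (2 * s * (L / 2 * ‖v‖ ^ 2)) s := by
      have h := (hasDerivAt_pow 2 s).mul_const (L / 2 * ‖v‖ ^ 2)
      simpa using h
    exact (h2.sub h3).sub h4
  have hanti : AntitoneOn ψ (Icc (0:ℝ) 1) := by
    apply antitoneOn_of_deriv_nonpos (convex_Icc 0 1)
    · exact fun s hs => (hderiv s hs).continuousAt.continuousWithinAt
    · intro s hs
      rw [interior_Icc] at hs
      exact (hderiv s (Ioo_subset_Icc_self hs)).differentiableAt.differentiableWithinAt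
    · intro s hs
      rw [interior_Icc] at hs
      rw [(hderiv s (Ioo_subset_Icc_self hs)).deriv]
      have h5 : ⟪g (a + s • v), v⟫ - ⟪g a, v⟫ ≤ ‖g (a + s • v) - g a‖ * ‖v‖ := by
        rw [← inner_sub_left]
        exact real_inner_le_norm _ _
      have h6 := hlip s (Ioo_subset_Icc_self hs)
      nlinarith [mul_le_mul_of_nonneg_right h6 (norm_nonneg v), norm_nonneg v, hs.1.le]
  have hfin := hanti (left_mem_Icc.2 zero_le_one) (right_mem_Icc.2 zero_le_one) zero_le_one
  simp only [hψ, one_smul, zero_smul, add_zero, one_pow, one_mul, zero_pow, zero_mul,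
    sub_zero, mul_zero, ne_eq, OfNat.ofNat_ne_zero, not_false_iff] at hfin
  linarith

set_option maxHeartbeats 1000000 in
theorem gd_strongly_convex_convergence (d : ℕ)
    (X : Set (EuclideanSpace ℝ (Fin d))) (hX : IsOpen X) (hXconv : Convex ℝ X)
    (f : EuclideanSpace ℝ (Fin d) → ℝ)
    (g : EuclideanSpace ℝ (Fin d) → EuclideanSpace ℝ (Fin d))
    (hgrad : ∀ x ∈ X, HasGradientAt f (g x) x)
    (μ : ℝ) (hμ : 0 < μ)
    (hsc : ∀ x ∈ X, ∀ y ∈ X, f y ≥ f x + ⟪g x, y - x⟫ + μ / 2 * ‖y - x‖ ^ 2)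
    (ℓ r : ℝ → ℝ) (hℓmono : Monotone ℓ) (hℓpos : ∀ u : ℝ, 0 ≤ u → 0 < ℓ u)
    (hranti : Antitone r) (hrpos : ∀ u : ℝ, 0 ≤ u → 0 < r u)
    (hball : ∀ x ∈ X, Metric.closedBall x (r ‖g x‖) ⊆ X)
    (hlip : ∀ x ∈ X, ∀ x₁ ∈ Metric.closedBall x (r ‖g x‖),
      ∀ x₂ ∈ Metric.closedBall x (r ‖g x‖),
        ‖g x₁ - g x₂‖ ≤ ℓ ‖g x‖ * ‖x₁ - x₂‖)
    (xstar : EuclideanSpace ℝ (Fin d)) (hxstar : xstar ∈ X)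
    (hmin : ∀ y ∈ X, f xstar ≤ f y)
    (x : ℕ → EuclideanSpace ℝ (Fin d)) (hx0 : x 0 ∈ X)
    (η : ℝ) (hη0 : 0 < η) (hημ : η * μ < 1)
    (hη : η ≤ min (1 / ℓ ‖g (x 0)‖) (r ‖g (x 0)‖ / (2 * ‖g (x 0)‖)))
    (hupdate : ∀ t : ℕ, x (t + 1) = x t - η • g (x t)) :
    ∀ T : ℕ, 1 ≤ T →
      f (x T) - f xstar ≤
        μ * (1 - η * μ) ^ T / (2 * (1 - (1 - η * μ) ^ T)) * ‖x 0 - xstar‖ ^ 2 := by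
  have hG0 : (0:ℝ) ≤ ‖g (x 0)‖ := norm_nonneg _
  have hGpos : 0 < ‖g (x 0)‖ := by
    rcases hG0.lt_or_eq with h | h
    · exact h
    · exfalso
      have h2 := le_trans hη (min_le_right _ _)
      rw [← h] at h2
      simp at h2
      linarith
  have hLpos : 0 < ℓ ‖g (x 0)‖ := hℓpos _ hG0
  have hηL : η * ℓ ‖g (x 0)‖ ≤ 1 := by
    have h := le_trans hη (min_le_left _ _)
    rw [le_div_iff₀ hLpos] at h
    linarith
  have hrGpos : 0 < r ‖g (x 0)‖ := hrpos _ hG0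
  have h2ηG : 2 * (η * ‖g (x 0)‖) ≤ r ‖g (x 0)‖ := by
    have h2 := le_trans hη (min_le_right _ _)
    rw [le_div_iff₀ (by positivity)] at h2
    linarith
  -- main one-step lemma
  have step : ∀ t : ℕ, x t ∈ X → ‖g (x t)‖ ≤ ‖g (x 0)‖ →
      x (t + 1) ∈ X ∧ ‖g (x (t + 1))‖ ≤ ‖g (x 0)‖ ∧
      f (x (t + 1)) ≤ f (x t) - η / 2 * ‖g (x t)‖ ^ 2 ∧
      ‖x (t + 1) - xstar‖ ^ 2 ≤
        (1 - η * μ) * ‖x t - xstar‖ ^ 2 - 2 * η * (f (x (t + 1)) - f xstar) := by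
    intro t hxt hgt
    have hn0 : (0:ℝ) ≤ ‖g (x t)‖ := norm_nonneg _
    have hL0pos : 0 < ℓ ‖g (x t)‖ := hℓpos _ hn0
    have hL0le : ℓ ‖g (x t)‖ ≤ ℓ ‖g (x 0)‖ := hℓmono hgt
    have hηL0 : η * ℓ ‖g (x t)‖ ≤ 1 :=
      le_trans (mul_le_mul_of_nonneg_left hL0le hη0.le) hηL
    have hrn : r ‖g (x 0)‖ ≤ r ‖g (x t)‖ := hranti hgt
    have hηn : 2 * (η * ‖g (x t)‖) ≤ r ‖g (x t)‖ := by
      linarith only [mul_le_mul_of_nonneg_left hgt hη0.le, h2ηG, hrn]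
    have hηnn : 0 ≤ η * ‖g (x t)‖ := by positivity
    -- descent lemma specialized to this ball
    have dl : ∀ c v : EuclideanSpace ℝ (Fin d),
        (∀ s : ℝ, 0 ≤ s → s ≤ 1 → ‖c + s • v - x t‖ ≤ r ‖g (x t)‖) →
        f (c + v) ≤ f c + ⟪g c, v⟫ + ℓ ‖g (x t)‖ / 2 * ‖v‖ ^ 2 := by
      intro c v hin
      have hin' : ∀ s ∈ Set.Icc (0:ℝ) 1,
          c + s • v ∈ Metric.closedBall (x t) (r ‖g (x t)‖) := by
        intro s hs
        rw [Metric.mem_closedBall, dist_eq_norm]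
        exact hin s hs.1 hs.2
      apply descent_lemma_aux f g (ℓ ‖g (x t)‖) c v
      · intro s hs
        exact hgrad _ (hball _ hxt (hin' s hs))
      · intro s hs
        have hc0 : c ∈ Metric.closedBall (x t) (r ‖g (x t)‖) := by
          have := hin' 0 (Set.left_mem_Icc.2 zero_le_one)
          simpa using this
        have h := hlip _ hxt _ (hin' s hs) _ hc0
        calc ‖g (c + s • v) - g c‖ ≤ ℓ ‖g (x t)‖ * ‖c + s • v - c‖ := h
          _ = ℓ ‖g (x t)‖ * (s * ‖v‖) := by
              rw [add_sub_cancel_left, norm_smul, Real.norm_eq_abs, abs_of_nonneg hs.1]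
    have hb : x (t + 1) = x t + -(η • g (x t)) := by rw [hupdate t, sub_eq_add_neg]
    have hnv : ‖(-(η • g (x t)) : EuclideanSpace ℝ (Fin d))‖ = η * ‖g (x t)‖ := by
      rw [norm_neg, norm_smul, Real.norm_eq_abs, abs_of_nonneg hη0.le]
    -- membership of the step segment
    have hmem1 : ∀ s : ℝ, 0 ≤ s → s ≤ 1 →
        ‖x t + s • -(η • g (x t)) - x t‖ ≤ r ‖g (x t)‖ := by
      intro s hs0 hs1
      have heq : ‖x t + s • -(η • g (x t)) - x t‖ = s * (η * ‖g (x t)‖) := by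
        rw [add_sub_cancel_left, norm_smul, Real.norm_eq_abs, abs_of_nonneg hs0, hnv]
      rw [heq]
      linarith only [mul_le_mul_of_nonneg_right hs1 hηnn, hηn, hηnn]
    -- descent inequality
    have hdesc0 := dl (x t) (-(η • g (x t))) hmem1
    rw [← hb] at hdesc0
    have hinner1 : ⟪g (x t), -(η • g (x t))⟫ = -(η * ‖g (x t)‖ ^ 2) := by
      rw [inner_neg_right, real_inner_smul_right, real_inner_self_eq_norm_sq]
    have hdesc : f (x (t + 1)) ≤ f (x t) - η / 2 * ‖g (x t)‖ ^ 2 := by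
      rw [hinner1, hnv] at hdesc0
      have hfact : 0 ≤ η * (1 - η * ℓ ‖g (x t)‖) * ‖g (x t)‖ ^ 2 :=
        mul_nonneg (mul_nonneg hη0.le (sub_nonneg.2 hηL0)) (sq_nonneg ‖g (x t)‖)
      nlinarith only [hdesc0, hfact]
    -- x (t+1) in the ball and in X
    have hbmem : x (t + 1) ∈ Metric.closedBall (x t) (r ‖g (x t)‖) := by
      rw [Metric.mem_closedBall, dist_eq_norm, hb, add_sub_cancel_left, hnv]
      linarith
    have hbX : x (t + 1) ∈ X := hball _ hxt hbmem
    -- cocoercivity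
    have hΔ : ‖g (x (t + 1)) - g (x t)‖ ≤ ℓ ‖g (x t)‖ * (η * ‖g (x t)‖) := by
      have h := hlip _ hxt _ hbmem _ (Metric.mem_closedBall_self (by linarith))
      have heq : ‖x (t + 1) - x t‖ = η * ‖g (x t)‖ := by
        rw [hb, add_sub_cancel_left, hnv]
      rw [heq] at h
      exact h
    have hΔinv : (ℓ ‖g (x t)‖)⁻¹ * ‖g (x (t + 1)) - g (x t)‖ ≤ η * ‖g (x t)‖ := by
      rw [inv_mul_le_iff₀ hL0pos]
      linarith [hΔ]
    have hΔnn : (0:ℝ) ≤ (ℓ ‖g (x t)‖)⁻¹ * ‖g (x (t + 1)) - g (x t)‖ := by positivity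
    set Δ : EuclideanSpace ℝ (Fin d) := g (x (t + 1)) - g (x t) with hΔdef
    have hnvΔ : ∀ s : ℝ, 0 ≤ s → s ≤ 1 →
        ‖s • ((ℓ ‖g (x t)‖)⁻¹ • Δ)‖ ≤ η * ‖g (x t)‖ := by
      intro s hs0 hs1
      rw [norm_smul, norm_smul, Real.norm_eq_abs, Real.norm_eq_abs, abs_of_nonneg hs0,
        abs_of_nonneg (inv_nonneg.2 hL0pos.le)]
      calc s * ((ℓ ‖g (x t)‖)⁻¹ * ‖Δ‖) ≤ 1 * ((ℓ ‖g (x t)‖)⁻¹ * ‖Δ‖) :=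
            mul_le_mul_of_nonneg_right hs1 hΔnn
        _ = (ℓ ‖g (x t)‖)⁻¹ * ‖Δ‖ := one_mul _
        _ ≤ η * ‖g (x t)‖ := hΔinv
    -- first auxiliary descent: from x (t+1)
    have hmem2 : ∀ s : ℝ, 0 ≤ s → s ≤ 1 →
        ‖x (t + 1) + s • -((ℓ ‖g (x t)‖)⁻¹ • Δ) - x t‖ ≤ r ‖g (x t)‖ := by
      intro s hs0 hs1
      have heq : x (t + 1) + s • -((ℓ ‖g (x t)‖)⁻¹ • Δ) - x t
          = (x (t + 1) - x t) + s • -((ℓ ‖g (x t)‖)⁻¹ • Δ) := by abel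
      rw [heq]
      have h1 := norm_add_le (x (t + 1) - x t) (s • -((ℓ ‖g (x t)‖)⁻¹ • Δ))
      have h2 : ‖x (t + 1) - x t‖ = η * ‖g (x t)‖ := by
        rw [hb, add_sub_cancel_left, hnv]
      have h3 : ‖s • -((ℓ ‖g (x t)‖)⁻¹ • Δ)‖ ≤ η * ‖g (x t)‖ := by
        rw [smul_neg, norm_neg]; exact hnvΔ s hs0 hs1
      calc ‖(x (t + 1) - x t) + s • -((ℓ ‖g (x t)‖)⁻¹ • Δ)‖
          ≤ ‖x (t + 1) - x t‖ + ‖s • -((ℓ ‖g (x t)‖)⁻¹ • Δ)‖ := h1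
        _ ≤ η * ‖g (x t)‖ + η * ‖g (x t)‖ := by rw [h2]; linarith
        _ ≤ r ‖g (x t)‖ := by linarith
    have hdl2 := dl (x (t + 1)) (-((ℓ ‖g (x t)‖)⁻¹ • Δ)) hmem2
    -- second auxiliary descent: from x t
    have hmem3 : ∀ s : ℝ, 0 ≤ s → s ≤ 1 →
        ‖x t + s • ((ℓ ‖g (x t)‖)⁻¹ • Δ) - x t‖ ≤ r ‖g (x t)‖ := by
      intro s hs0 hs1
      rw [add_sub_cancel_left]
      calc ‖s • ((ℓ ‖g (x t)‖)⁻¹ • Δ)‖ ≤ η * ‖g (x t)‖ := hnvΔ s hs0 hs1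
        _ ≤ r ‖g (x t)‖ := by linarith
    have hdl3 := dl (x t) ((ℓ ‖g (x t)‖)⁻¹ • Δ) hmem3
    -- the auxiliary points are in X
    have hy1X : x (t + 1) + -((ℓ ‖g (x t)‖)⁻¹ • Δ) ∈ X := by
      apply hball _ hxt
      rw [Metric.mem_closedBall, dist_eq_norm]
      have := hmem2 1 zero_le_one le_rfl
      simpa using this
    have hy2X : x t + (ℓ ‖g (x t)‖)⁻¹ • Δ ∈ X := by
      apply hball _ hxt
      rw [Metric.mem_closedBall, dist_eq_norm]
      have := hmem3 1 zero_le_one le_rfl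
      simpa using this
    -- strong convexity inequalities at the auxiliary points
    have hsc1 := hsc (x t) hxt _ hy1X
    have hsc2 := hsc (x (t + 1)) hbX _ hy2X
    -- inner product bookkeeping
    have hnormv : ‖-((ℓ ‖g (x t)‖)⁻¹ • Δ)‖ = (ℓ ‖g (x t)‖)⁻¹ * ‖Δ‖ := by
      rw [norm_neg, norm_smul, Real.norm_eq_abs, abs_of_nonneg (inv_nonneg.2 hL0pos.le)]
    have hnormv2 : ‖(ℓ ‖g (x t)‖)⁻¹ • Δ‖ = (ℓ ‖g (x t)‖)⁻¹ * ‖Δ‖ := by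
      rw [norm_smul, Real.norm_eq_abs, abs_of_nonneg (inv_nonneg.2 hL0pos.le)]
    have hi1 : ⟪g (x (t + 1)), -((ℓ ‖g (x t)‖)⁻¹ • Δ)⟫
        = -((ℓ ‖g (x t)‖)⁻¹ * ⟪g (x (t + 1)), Δ⟫) := by
      rw [inner_neg_right, real_inner_smul_right]
    have hi2 : ⟪g (x t), (ℓ ‖g (x t)‖)⁻¹ • Δ⟫
        = (ℓ ‖g (x t)‖)⁻¹ * ⟪g (x t), Δ⟫ := real_inner_smul_right _ _ _
    have hi3 : ⟪g (x t), x (t + 1) + -((ℓ ‖g (x t)‖)⁻¹ • Δ) - x t⟫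
        = ⟪g (x t), x (t + 1) - x t⟫ - (ℓ ‖g (x t)‖)⁻¹ * ⟪g (x t), Δ⟫ := by
      have : x (t + 1) + -((ℓ ‖g (x t)‖)⁻¹ • Δ) - x t
          = (x (t + 1) - x t) - (ℓ ‖g (x t)‖)⁻¹ • Δ := by abel
      rw [this, inner_sub_right, real_inner_smul_right]
    have hi4 : ⟪g (x (t + 1)), x t + (ℓ ‖g (x t)‖)⁻¹ • Δ - x (t + 1)⟫
        = -⟪g (x (t + 1)), x (t + 1) - x t⟫ + (ℓ ‖g (x t)‖)⁻¹ * ⟪g (x (t + 1)), Δ⟫ := by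
      have : x t + (ℓ ‖g (x t)‖)⁻¹ • Δ - x (t + 1)
          = -(x (t + 1) - x t) + (ℓ ‖g (x t)‖)⁻¹ • Δ := by abel
      rw [this, inner_add_right, inner_neg_right, real_inner_smul_right]
    have hPQ : ⟪g (x (t + 1)), Δ⟫ - ⟪g (x t), Δ⟫ = ‖Δ‖ ^ 2 := by
      rw [← inner_sub_left, hΔdef, real_inner_self_eq_norm_sq]
    -- combine to get cocoercivity
    have hL0inv : ℓ ‖g (x t)‖ * (ℓ ‖g (x t)‖)⁻¹ = 1 := mul_inv_cancel₀ hL0pos.ne'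
    have hcoco : (ℓ ‖g (x t)‖)⁻¹ * ‖Δ‖ ^ 2
        ≤ ⟪g (x (t + 1)), x (t + 1) - x t⟫ - ⟪g (x t), x (t + 1) - x t⟫ := by
      rw [hi1, hnormv] at hdl2
      rw [hi2, hnormv2] at hdl3
      rw [hi3] at hsc1
      rw [hi4] at hsc2
      have e1 : ℓ ‖g (x t)‖ / 2 * ((ℓ ‖g (x t)‖)⁻¹ * ‖Δ‖) ^ 2
          = (ℓ ‖g (x t)‖)⁻¹ * ‖Δ‖ ^ 2 / 2 := by
        field_simp
      rw [e1] at hdl2 hdl3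
      have hPQ' : (ℓ ‖g (x t)‖)⁻¹ * ⟪g (x (t + 1)), Δ⟫ - (ℓ ‖g (x t)‖)⁻¹ * ⟪g (x t), Δ⟫
          = (ℓ ‖g (x t)‖)⁻¹ * ‖Δ‖ ^ 2 := by
        rw [← mul_sub, hPQ]
      linarith [mul_nonneg (div_nonneg hμ.le (by norm_num : (0:ℝ) ≤ 2))
          (sq_nonneg ‖x (t + 1) + -((ℓ ‖g (x t)‖)⁻¹ • Δ) - x t‖),
        mul_nonneg (div_nonneg hμ.le (by norm_num : (0:ℝ) ≤ 2))
          (sq_nonneg ‖x t + (ℓ ‖g (x t)‖)⁻¹ • Δ - x (t + 1)‖)]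
    -- gradient norm decreases
    have hib : ⟪g (x t), x (t + 1) - x t⟫ = -(η * ⟪g (x t), g (x t)⟫) := by
      rw [hb, add_sub_cancel_left, inner_neg_right, real_inner_smul_right]
    have hib2 : ⟪g (x (t + 1)), x (t + 1) - x t⟫ = -(η * ⟪g (x (t + 1)), g (x t)⟫) := by
      rw [hb, add_sub_cancel_left, inner_neg_right, real_inner_smul_right]
    have hP : ⟪g (x t), Δ⟫ = ⟪g (x (t+1)), g (x t)⟫ - ⟪g (x t), g (x t)⟫ := by
      rw [hΔdef, inner_sub_right]
      rw [real_inner_comm (g (x t)) (g (x (t+1)))]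
    have hcoco2 : (ℓ ‖g (x t)‖)⁻¹ * ‖Δ‖ ^ 2 ≤ -(η * ⟪g (x t), Δ⟫) := by
      rw [hib, hib2] at hcoco
      rw [hP]
      nlinarith only [hcoco]
    have hgb : g (x (t + 1)) = g (x t) + Δ := by rw [hΔdef]; abel
    have hPneg : ⟪g (x t), Δ⟫ ≤ 0 := by
      nlinarith only [hcoco2, sq_nonneg ‖Δ‖, hη0, inv_pos.2 hL0pos]
    have hgbsq : ‖g (x (t + 1))‖ ^ 2 ≤ ‖g (x t)‖ ^ 2 := by
      rw [hgb, norm_add_sq_real]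
      have hmulL := mul_le_mul_of_nonneg_left hcoco2 hL0pos.le
      rw [mul_inv_cancel_left₀ hL0pos.ne'] at hmulL
      nlinarith only [hmulL, mul_nonneg (sub_nonneg.2 hηL0) (neg_nonneg.2 hPneg), hPneg]
    have hgble : ‖g (x (t + 1))‖ ≤ ‖g (x 0)‖ := by
      have h1 : ‖g (x (t + 1))‖ ≤ ‖g (x t)‖ := by
        nlinarith only [hgbsq, norm_nonneg (g (x (t + 1))), norm_nonneg (g (x t))]
      linarith only [h1, hgt]
    -- distance recursion
    have hdist : ‖x (t + 1) - xstar‖ ^ 2 ≤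
        (1 - η * μ) * ‖x t - xstar‖ ^ 2 - 2 * η * (f (x (t + 1)) - f xstar) := by
      have hexp : x (t + 1) - xstar = (x t - xstar) - η • g (x t) := by
        rw [hupdate t]; abel
      have hsq : ‖x (t + 1) - xstar‖ ^ 2 = ‖x t - xstar‖ ^ 2
          - 2 * (η * ⟪x t - xstar, g (x t)⟫) + (η * ‖g (x t)‖) ^ 2 := by
        rw [hexp, norm_sub_sq_real, real_inner_smul_right, norm_smul, Real.norm_eq_abs,
          abs_of_nonneg hη0.le]
      have hscm := hsc (x t) hxt xstar hxstar
      have hi5 : ⟪g (x t), xstar - x t⟫ = -⟪x t - xstar, g (x t)⟫ := by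
        rw [real_inner_comm, ← inner_neg_left, neg_sub]
      have hi6 : ‖xstar - x t‖ = ‖x t - xstar‖ := norm_sub_rev _ _
      rw [hi5, hi6] at hscm
      rw [hsq]
      nlinarith only [mul_le_mul_of_nonneg_left hdesc (by positivity : (0:ℝ) ≤ 2 * η),
        mul_le_mul_of_nonneg_left hscm.le (by positivity : (0:ℝ) ≤ 2 * η)]
    exact ⟨hbX, hgble, hdesc, hdist⟩
  -- invariant
  have inv : ∀ t, x t ∈ X ∧ ‖g (x t)‖ ≤ ‖g (x 0)‖ := by
    intro t
    induction t with
    | zero => exact ⟨hx0, le_refl _⟩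
    | succ k ih => exact ⟨(step k ih.1 ih.2).1, (step k ih.1 ih.2).2.1⟩
  have hdec : ∀ t, f (x (t + 1)) ≤ f (x t) := by
    intro t
    have h := (step t (inv t).1 (inv t).2).2.2.1
    have h2 : 0 ≤ η / 2 * ‖g (x t)‖ ^ 2 := by positivity
    linarith only [h, h2]
  have honestep : ∀ t, ‖x (t + 1) - xstar‖ ^ 2 ≤
      (1 - η * μ) * ‖x t - xstar‖ ^ 2 - 2 * η * (f (x (t + 1)) - f xstar) :=
    fun t => (step t (inv t).1 (inv t).2).2.2.2
  have hfmin : ∀ t, 0 ≤ f (x t) - f xstar := fun t => sub_nonneg.2 (hmin _ (inv t).1)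
  have hq0 : 0 < 1 - η * μ := by linarith
  have key : ∀ T, ‖x T - xstar‖ ^ 2 ≤ (1 - η * μ) ^ T * ‖x 0 - xstar‖ ^ 2
      - 2 * η * (f (x T) - f xstar) * ∑ i ∈ Finset.range T, (1 - η * μ) ^ i := by
    intro T
    induction T with
    | zero => simp
    | succ k ih =>
      have h1 := honestep k
      have hS0 : (0:ℝ) ≤ ∑ i ∈ Finset.range k, (1 - η * μ) ^ i :=
        Finset.sum_nonneg fun i _ => pow_nonneg hq0.le i
      have hA : f (x (k + 1)) ≤ f (x k) := hdec k
      rw [geom_sum_succ, pow_succ (1 - η * μ) k]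
      nlinarith only [h1, mul_le_mul_of_nonneg_left ih hq0.le,
        mul_nonneg (mul_nonneg (mul_nonneg hη0.le hq0.le) hS0) (sub_nonneg.2 hA),
        hfmin (k + 1), hη0.le]
  intro T hT
  have hk := key T
  have hDT : (0:ℝ) ≤ ‖x T - xstar‖ ^ 2 := sq_nonneg _
  have hημ0 : 0 < η * μ := mul_pos hη0 hμ
  have hqT1 : (1 - η * μ) ^ T < 1 := pow_lt_one₀ hq0.le (by linarith only [hημ0]) (by omega)
  have hqT0 : 0 < (1 - η * μ) ^ T := pow_pos hq0 T
  have hgs : ∑ i ∈ Finset.range T, (1 - η * μ) ^ i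
      = (1 - (1 - η * μ) ^ T) / (η * μ) := by
    rw [geom_sum_eq (ne_of_lt (by linarith only [hημ0])) T]
    rw [div_eq_div_iff (ne_of_lt (show (1 - η * μ) - 1 < 0 by linarith only [hημ0])) (by positivity)]
    ring
  rw [hgs] at hk
  have hmain : 2 * η * (f (x T) - f xstar) * ((1 - (1 - η * μ) ^ T) / (η * μ))
      ≤ (1 - η * μ) ^ T * ‖x 0 - xstar‖ ^ 2 := by linarith
  rw [div_mul_eq_mul_div, le_div_iff₀ (by linarith only [hqT1] : (0:ℝ) < 2 * (1 - (1 - η * μ) ^ T))]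
  have heq : 2 * η * (f (x T) - f xstar) * ((1 - (1 - η * μ) ^ T) / (η * μ))
      = (f (x T) - f xstar) * (2 * (1 - (1 - η * μ) ^ T)) / μ := by
    field_simp
  rw [heq, div_le_iff₀ hμ] at hmain
  nlinarith only [hmain]
end

section
/- Let f: 𝒳 → ℝ be (r,ℓ)-smooth on open 𝒳 ⊆ ℝ^d with ℓ sub-quadratic (lim_{u→∞} ℓ(u)/u² = 0), bounded below by f*, and let G satisfy G ≥ max{√(32 ℓ(G)(f(x_0) − f*)), 2‖∇f(x_0)‖}. Let L = ℓ(G) and run gradient descent x_{t+1} = x_t − η∇f(x_t) with η ≤ min{r(G)/G, 1/(4L)}. Then ‖∇f(x_t)‖ ≤ G for all t ≥ 0, and (1/T)∑_{t<T} ‖∇f(x_t)‖² ≤ 2(f(x_0) − f*)/(ηT). -/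
open Filter

set_option maxHeartbeats 1000000 in
theorem gd_nonconvex_convergence (d : ℕ)
    (X : Set (EuclideanSpace ℝ (Fin d))) (hX : IsOpen X)
    (f : EuclideanSpace ℝ (Fin d) → ℝ)
    (g : EuclideanSpace ℝ (Fin d) → EuclideanSpace ℝ (Fin d))
    (hgrad : ∀ x ∈ X, HasGradientAt f (g x) x)
    (ℓ r : ℝ → ℝ) (hℓmono : Monotone ℓ) (hℓpos : ∀ u : ℝ, 0 ≤ u → 0 < ℓ u)
    (hranti : Antitone r) (hrpos : ∀ u : ℝ, 0 ≤ u → 0 < r u)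
    (hball : ∀ x ∈ X, Metric.closedBall x (r ‖g x‖) ⊆ X)
    (hlip : ∀ x ∈ X, ∀ x₁ ∈ Metric.closedBall x (r ‖g x‖),
      ∀ x₂ ∈ Metric.closedBall x (r ‖g x‖),
        ‖g x₁ - g x₂‖ ≤ ℓ ‖g x‖ * ‖x₁ - x₂‖)
    (hsubquad : Tendsto (fun u : ℝ => ℓ u / u ^ 2) atTop (nhds 0))
    (fstar : ℝ) (hfstar : ∀ x ∈ X, fstar ≤ f x)
    (x : ℕ → EuclideanSpace ℝ (Fin d)) (hx0 : x 0 ∈ X)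
    (G : ℝ)
    (hG : G ≥ max (Real.sqrt (32 * ℓ G * (f (x 0) - fstar))) (2 * ‖g (x 0)‖))
    (η : ℝ) (hη0 : 0 < η) (hη : η ≤ min (r G / G) (1 / (4 * ℓ G)))
    (hupdate : ∀ t : ℕ, x (t + 1) = x t - η • g (x t)) :
    (∀ t : ℕ, x t ∈ X ∧ ‖g (x t)‖ ≤ G) ∧
    ∀ T : ℕ, 1 ≤ T →
      (1 / (T : ℝ)) * ∑ t ∈ Finset.range T, ‖g (x t)‖ ^ 2 ≤
        2 * (f (x 0) - fstar) / (η * T) := by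
  have hG0 : 0 ≤ G := le_trans (by positivity) (le_trans (le_max_right _ _) hG)
  have hL : 0 < ℓ G := hℓpos G hG0
  have hΔ : 0 ≤ f (x 0) - fstar := sub_nonneg.2 (hfstar _ hx0)
  have hηL : η * ℓ G ≤ 1 / 4 := by
    have h1 : η ≤ 1 / (4 * ℓ G) := hη.trans (min_le_right _ _)
    rw [le_div_iff₀ (by positivity)] at h1
    linarith
  have hG2 : 32 * ℓ G * (f (x 0) - fstar) ≤ G ^ 2 := by
    have h1 : Real.sqrt (32 * ℓ G * (f (x 0) - fstar)) ≤ G :=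
      le_trans (le_max_left _ _) hG
    calc 32 * ℓ G * (f (x 0) - fstar)
        = Real.sqrt (32 * ℓ G * (f (x 0) - fstar)) ^ 2 :=
          (Real.sq_sqrt (by positivity)).symm
      _ ≤ G ^ 2 := pow_le_pow_left₀ (Real.sqrt_nonneg _) h1 2
  -- one step of gradient descent
  have key : ∀ y ∈ X, ‖g y‖ ≤ G →
      y - η • g y ∈ X ∧
      ‖g (y - η • g y)‖ ≤ (1 + η * ℓ G) * ‖g y‖ ∧
      f (y - η • g y) ≤ f y - 3 / 4 * η * ‖g y‖ ^ 2 := by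
    intro y hy hgy
    have ha0 : (0:ℝ) ≤ ‖g y‖ := norm_nonneg _
    have hla : ℓ ‖g y‖ ≤ ℓ G := hℓmono hgy
    have hla0 : 0 < ℓ ‖g y‖ := hℓpos _ ha0
    have hstep : η * ‖g y‖ ≤ r ‖g y‖ := by
      rcases eq_or_lt_of_le ha0 with h0 | h0
      · rw [← h0, mul_zero]; exact (hrpos 0 le_rfl).le
      · have hGpos : 0 < G := lt_of_lt_of_le h0 hgy
        have h1 : η ≤ r G / G := hη.trans (min_le_left _ _)
        rw [le_div_iff₀ hGpos] at h1
        calc η * ‖g y‖ ≤ η * G := mul_le_mul_of_nonneg_left hgy hη0.le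
          _ ≤ r G := h1
          _ ≤ r ‖g y‖ := hranti hgy
    have hdiff : y - η • g y - y = -(η • g y) := by abel
    have hnorm2 : ‖-(η • g y)‖ = η * ‖g y‖ := by
      rw [norm_neg, norm_smul, Real.norm_eq_abs, abs_of_pos hη0]
    have hnorm : ‖y - η • g y - y‖ = η * ‖g y‖ := by rw [hdiff, hnorm2]
    have hmem : y - η • g y ∈ Metric.closedBall y (r ‖g y‖) := by
      rw [Metric.mem_closedBall, dist_eq_norm, hnorm]; exact hstep
    have hmemy : y ∈ Metric.closedBall y (r ‖g y‖) :=
      Metric.mem_closedBall_self (hrpos _ ha0).le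
    have hXmem : y - η • g y ∈ X := hball y hy hmem
    -- gradient bound
    have hgl := hlip y hy _ hmem y hmemy
    rw [hnorm] at hgl
    have hgb : ‖g (y - η • g y)‖ ≤ (1 + η * ℓ G) * ‖g y‖ := by
      have h2 : ‖g (y - η • g y)‖ ≤ ‖g (y - η • g y) - g y‖ + ‖g y‖ := by
        simpa using norm_add_le (g (y - η • g y) - g y) (g y)
      have h3 : ℓ ‖g y‖ * (η * ‖g y‖) ≤ ℓ G * (η * ‖g y‖) :=
        mul_le_mul_of_nonneg_right hla (by positivity)
      nlinarith
    -- descent lemma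
    have hsub : Metric.closedBall y (η * ‖g y‖) ⊆ Metric.closedBall y (r ‖g y‖) :=
      Metric.closedBall_subset_closedBall hstep
    have hd : ∀ z ∈ Metric.closedBall y (η * ‖g y‖),
        HasFDerivWithinAt f (InnerProductSpace.toDual ℝ _ (g z))
          (Metric.closedBall y (η * ‖g y‖)) z := fun z hz =>
      ((hgrad z (hball y hy (hsub hz))).hasFDerivAt).hasFDerivWithinAt
    have hbound : ∀ z ∈ Metric.closedBall y (η * ‖g y‖),
        ‖InnerProductSpace.toDual ℝ _ (g z) - InnerProductSpace.toDual ℝ _ (g y)‖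
          ≤ ℓ ‖g y‖ * (η * ‖g y‖) := by
      intro z hz
      rw [← map_sub, LinearIsometryEquiv.norm_map]
      have h1 := hlip y hy z (hsub hz) y hmemy
      have h2 : ‖z - y‖ ≤ η * ‖g y‖ := by
        rw [← dist_eq_norm]; exact hz
      calc ‖g z - g y‖ ≤ ℓ ‖g y‖ * ‖z - y‖ := h1
        _ ≤ ℓ ‖g y‖ * (η * ‖g y‖) := mul_le_mul_of_nonneg_left h2 hla0.le
    have hmem1 : y ∈ Metric.closedBall y (η * ‖g y‖) :=
      Metric.mem_closedBall_self (by positivity)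
    have hmem2 : y - η • g y ∈ Metric.closedBall y (η * ‖g y‖) := by
      rw [Metric.mem_closedBall, dist_eq_norm, hnorm]
    have hmvt := (convex_closedBall y (η * ‖g y‖)).norm_image_sub_le_of_norm_hasFDerivWithin_le'
      hd hbound hmem1 hmem2
    have hinner : (InnerProductSpace.toDual ℝ (EuclideanSpace ℝ (Fin d)) (g y)) (-(η • g y))
        = -(η * ‖g y‖ ^ 2) := by
      rw [InnerProductSpace.toDual_apply_apply, inner_neg_right, real_inner_smul_right,
        real_inner_self_eq_norm_sq]
    simp only [hdiff, hnorm2, hinner] at hmvt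
    have habs := abs_le.1 (by rwa [Real.norm_eq_abs] at hmvt)
    refine ⟨hXmem, hgb, ?_⟩
    have hq : ℓ ‖g y‖ * (η * ‖g y‖) * (η * ‖g y‖) ≤ 1 / 4 * η * ‖g y‖ ^ 2 := by
      have h5 : η * ℓ ‖g y‖ ≤ 1 / 4 :=
        le_trans (mul_le_mul_of_nonneg_left hla hη0.le) hηL
      nlinarith [mul_le_mul_of_nonneg_right h5 (mul_nonneg hη0.le (sq_nonneg ‖g y‖))]
    linarith [habs.2]
  -- invariant
  have inv : ∀ t, x t ∈ X ∧
      ‖g (x t)‖ ^ 2 + 8 * ℓ G * (f (x t) - fstar) ≤ G ^ 2 / 2 := by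
    intro t
    induction t with
    | zero =>
      refine ⟨hx0, ?_⟩
      have h2 : 2 * ‖g (x 0)‖ ≤ G := le_trans (le_max_right _ _) hG
      have h4 : 4 * ‖g (x 0)‖ ^ 2 ≤ G ^ 2 := by
        nlinarith [mul_le_mul h2 h2 (by positivity) hG0]
      linarith
    | succ t ih =>
      obtain ⟨hxt, hVt⟩ := ih
      have hft : fstar ≤ f (x t) := hfstar _ hxt
      have hgt2 : ‖g (x t)‖ ^ 2 ≤ G ^ 2 := by nlinarith
      have hgt : ‖g (x t)‖ ≤ G := by
        have h := Real.sqrt_le_sqrt hgt2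
        rwa [Real.sqrt_sq (norm_nonneg _), Real.sqrt_sq hG0] at h
      obtain ⟨h1, h2, h3⟩ := key (x t) hxt hgt
      rw [← hupdate t] at h1 h2 h3
      refine ⟨h1, ?_⟩
      have hg2 : ‖g (x (t + 1))‖ ^ 2 ≤ (1 + η * ℓ G) ^ 2 * ‖g (x t)‖ ^ 2 := by
        calc ‖g (x (t + 1))‖ ^ 2 ≤ ((1 + η * ℓ G) * ‖g (x t)‖) ^ 2 :=
              pow_le_pow_left₀ (norm_nonneg _) h2 2
          _ = (1 + η * ℓ G) ^ 2 * ‖g (x t)‖ ^ 2 := by ring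
      have hu0 : 0 ≤ η * ℓ G := by positivity
      nlinarith [mul_nonneg hu0 (sq_nonneg ‖g (x t)‖),
        mul_le_mul_of_nonneg_right hηL (mul_nonneg hu0 (sq_nonneg ‖g (x t)‖))]
  have hbd : ∀ t : ℕ, x t ∈ X ∧ ‖g (x t)‖ ≤ G := by
    intro t
    obtain ⟨hxt, hVt⟩ := inv t
    have hft : fstar ≤ f (x t) := hfstar _ hxt
    have hgt2 : ‖g (x t)‖ ^ 2 ≤ G ^ 2 := by nlinarith
    refine ⟨hxt, ?_⟩
    have h := Real.sqrt_le_sqrt hgt2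
    rwa [Real.sqrt_sq (norm_nonneg _), Real.sqrt_sq hG0] at h
  refine ⟨hbd, ?_⟩
  have desc : ∀ t, f (x (t + 1)) ≤ f (x t) - 3 / 4 * η * ‖g (x t)‖ ^ 2 := by
    intro t
    obtain ⟨h1, h2, h3⟩ := key (x t) (hbd t).1 (hbd t).2
    rwa [← hupdate t] at h3
  have hsum : ∀ T : ℕ,
      3 / 4 * η * ∑ t ∈ Finset.range T, ‖g (x t)‖ ^ 2 ≤ f (x 0) - f (x T) := by
    intro T
    induction T with
    | zero => simp
    | succ T ih =>
      rw [Finset.sum_range_succ, mul_add]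
      linarith [desc T]
  intro T hT
  have hT0 : (0:ℝ) < T := by exact_mod_cast Nat.lt_of_lt_of_le Nat.zero_lt_one hT
  have hfT : fstar ≤ f (x T) := hfstar _ (hbd T).1
  have hS : η * ∑ t ∈ Finset.range T, ‖g (x t)‖ ^ 2 ≤ 2 * (f (x 0) - fstar) := by
    linarith [hsum T]
  have hgoal : (1 / (T : ℝ)) * ∑ t ∈ Finset.range T, ‖g (x t)‖ ^ 2
      = (∑ t ∈ Finset.range T, ‖g (x t)‖ ^ 2) / T := by ring
  rw [hgoal, div_le_div_iff₀ hT0 (by positivity)]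
  nlinarith [mul_le_mul_of_nonneg_right hS hT0.le]
end

section
/- Define A_0 = 1/η (η > 0), B_0 = 0, B_{t+1} = B_t + (1+√(4B_t+1))/2, A_t = B_t + 1/η. Then for all t ≥ 1, (1 − A_t/A_{t+1})·(1/A_t)·∑_{s=0}^{t−1} √(A_{s+1})·(A_{s+1} − A_s − 1) ≤ 4. -/
theorem nag_weight_coefficient_sum (η : ℝ) (hη : 0 < η)
    (B A : ℕ → ℝ) (hB0 : B 0 = 0)
    (hBrec : ∀ t : ℕ, B (t + 1) = B t + (1 + Real.sqrt (4 * B t + 1)) / 2)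
    (hA : ∀ t : ℕ, A t = B t + 1 / η) :
    ∀ t : ℕ, 1 ≤ t →
      (1 - A t / A (t + 1)) * (1 / A t) *
        ∑ s ∈ Finset.range t, Real.sqrt (A (s + 1)) * (A (s + 1) - A s - 1) ≤ 4 := by
  have hBnn : ∀ t, 0 ≤ B t := by
    intro t
    induction t with
    | zero => simp [hB0]
    | succ n ih =>
      rw [hBrec]
      have h1 : 0 ≤ Real.sqrt (4 * B n + 1) := Real.sqrt_nonneg _
      linarith
  have hstep : ∀ t, Real.sqrt (B (t + 1)) = (1 + Real.sqrt (4 * B t + 1)) / 2 := by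
    intro t
    have hd : (0:ℝ) ≤ (1 + Real.sqrt (4 * B t + 1)) / 2 := by
      have := Real.sqrt_nonneg (4 * B t + 1); linarith
    have hsq : B (t + 1) = ((1 + Real.sqrt (4 * B t + 1)) / 2) ^ 2 := by
      have h1 : Real.sqrt (4 * B t + 1) ^ 2 = 4 * B t + 1 :=
        Real.sq_sqrt (by have := hBnn t; linarith)
      rw [hBrec]; nlinarith [h1]
    rw [hsq, Real.sqrt_sq hd]
  have hstep' : ∀ t, B (t + 1) = B t + Real.sqrt (B (t + 1)) := by
    intro t; rw [hstep, hBrec]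
  have hmono : Monotone B := monotone_nat_of_le_succ (fun n => by
    have := Real.sqrt_nonneg (B (n + 1)); linarith [hstep' n])
  have hlow : ∀ t : ℕ, (t : ℝ) ^ 2 / 4 ≤ B t := by
    intro t
    induction t with
    | zero => simp [hB0]
    | succ n ih =>
      have hn : (n : ℝ) ≤ Real.sqrt (4 * B n + 1) := by
        have h1 : (n : ℝ) = Real.sqrt ((n : ℝ) ^ 2) :=
          (Real.sqrt_sq (Nat.cast_nonneg n)).symm
        rw [h1]
        exact Real.sqrt_le_sqrt (by nlinarith)
      rw [hBrec]
      push_cast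
      nlinarith
  have hApos : ∀ s, 0 < A s := by
    intro s; rw [hA]
    have := hBnn s
    have h1 : 0 < 1 / η := by positivity
    linarith
  intro t ht
  have hsum : ∑ s ∈ Finset.range t, Real.sqrt (A (s + 1)) * (A (s + 1) - A s - 1)
      ≤ (t : ℝ) * A t := by
    calc ∑ s ∈ Finset.range t, Real.sqrt (A (s + 1)) * (A (s + 1) - A s - 1)
        ≤ ∑ s ∈ Finset.range t, A t := by
          apply Finset.sum_le_sum
          intro s hs
          have hs' : s + 1 ≤ t := Finset.mem_range.mp hs
          have hdiff : A (s + 1) - A s = Real.sqrt (B (s + 1)) := by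
            rw [hA, hA]; have := hstep' s; linarith
          have hle1 : Real.sqrt (A (s + 1)) * (A (s + 1) - A s - 1)
              ≤ Real.sqrt (A (s + 1)) * Real.sqrt (B (s + 1)) := by
            apply mul_le_mul_of_nonneg_left _ (Real.sqrt_nonneg _)
            rw [hdiff]; linarith
          have hBA : B (s + 1) ≤ A (s + 1) := by
            rw [hA]
            have h9 : 0 < 1 / η := by positivity
            linarith
          have hle2 : Real.sqrt (A (s + 1)) * Real.sqrt (B (s + 1))
              ≤ Real.sqrt (A (s + 1)) * Real.sqrt (A (s + 1)) :=
            mul_le_mul_of_nonneg_left (Real.sqrt_le_sqrt hBA) (Real.sqrt_nonneg _)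
          have hle3 : Real.sqrt (A (s + 1)) * Real.sqrt (A (s + 1)) = A (s + 1) :=
            Real.mul_self_sqrt (hApos _).le
          have hle4 : A (s + 1) ≤ A t := by
            rw [hA, hA]; have := hmono hs'; linarith
          linarith
      _ = (t : ℝ) * A t := by
          rw [Finset.sum_const, Finset.card_range, nsmul_eq_mul]
  have hAt := hApos t
  have hAt1 := hApos (t + 1)
  have hdiff : A (t + 1) - A t = Real.sqrt (B (t + 1)) := by
    rw [hA, hA]; have := hstep' t; linarith
  have h1 : 1 - A t / A (t + 1) = Real.sqrt (B (t + 1)) / A (t + 1) := by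
    field_simp
    linarith
  rw [h1]
  have hc : 0 ≤ Real.sqrt (B (t + 1)) / A (t + 1) * (1 / A t) := by positivity
  have h2 : Real.sqrt (B (t + 1)) / A (t + 1) * (1 / A t) *
      ∑ s ∈ Finset.range t, Real.sqrt (A (s + 1)) * (A (s + 1) - A s - 1)
      ≤ Real.sqrt (B (t + 1)) / A (t + 1) * (1 / A t) * ((t : ℝ) * A t) :=
    mul_le_mul_of_nonneg_left hsum hc
  have h3 : Real.sqrt (B (t + 1)) / A (t + 1) * (1 / A t) * ((t : ℝ) * A t)
      = Real.sqrt (B (t + 1)) * (t : ℝ) / A (t + 1) := by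
    field_simp
  have hhalf : (t : ℝ) / 2 ≤ Real.sqrt (B (t + 1)) := by
    have h4 : ((t : ℝ) / 2) = Real.sqrt (((t : ℝ) / 2) ^ 2) :=
      (Real.sqrt_sq (by positivity)).symm
    rw [h4]
    apply Real.sqrt_le_sqrt
    have := hlow (t + 1)
    push_cast at this
    nlinarith [Nat.cast_nonneg (α := ℝ) t]
  have hfin : Real.sqrt (B (t + 1)) * (t : ℝ) / A (t + 1) ≤ 4 := by
    rw [div_le_iff₀ hAt1]
    have hsq : Real.sqrt (B (t + 1)) * Real.sqrt (B (t + 1)) = B (t + 1) :=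
      Real.mul_self_sqrt (hBnn _)
    have hB1 : B (t + 1) ≤ A (t + 1) := by
      rw [hA]
      have h9 : 0 < 1 / η := by positivity
      linarith
    nlinarith [Real.sqrt_nonneg (B (t + 1))]
  linarith [h2, h3.le, h3.ge, hfin]
end

section
/- Let 0 < ημ < 1 and define B_0 = 0, B_{t+1} = (2B_t + 1 + √(4B_t + 4ημB_t² + 1))/(2(1−ημ)), A_t = B_t + 1/(ημ). Then for all t ≥ 1, ∑_{s=0}^{t−1} √(A_{s+1})/A_t ≤ 3 + 4·log(e + 1/(ημ)). -/
private lemma nag_aux_exp (c x : ℝ) (hc : 0 < c) (hx : 0 ≤ x) :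
    x ≤ Real.log (Real.exp 1 + 1 / c) * (c * Real.exp x + 1) := by
  set L := Real.log (Real.exp 1 + 1 / c) with hLdef
  have hpos : (0:ℝ) < Real.exp 1 + 1 / c := by positivity
  have hL : 1 ≤ L := by
    rw [hLdef]
    exact (Real.le_log_iff_exp_le hpos).2 (by nlinarith [one_div_pos.2 hc])
  have hexpL : Real.exp L = Real.exp 1 + 1 / c := Real.exp_log hpos
  rcases le_or_gt x L with h | h
  · nlinarith [mul_pos hc (Real.exp_pos x)]
  · have h1 : 1 + (x - L) ≤ Real.exp (x - L) := by
      have := Real.add_one_le_exp (x - L); linarith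
    have h2 : Real.exp x = Real.exp L * Real.exp (x - L) := by
      rw [← Real.exp_add]; ring_nf
    have h3 : c * Real.exp L = c * Real.exp 1 + 1 := by
      rw [hexpL, mul_add, mul_one_div, div_self hc.ne']
    have hce : 0 < c * Real.exp 1 := mul_pos hc (Real.exp_pos 1)
    have hkey : 1 + (x - L) ≤ c * Real.exp x := by
      calc 1 + (x - L) ≤ Real.exp (x - L) := h1
        _ ≤ (c * Real.exp 1 + 1) * Real.exp (x - L) := by
            nlinarith [Real.exp_pos (x - L)]
        _ = c * Real.exp x := by rw [h2, ← h3]; ring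
    nlinarith [mul_nonneg (by linarith : (0:ℝ) ≤ L - 1) (by linarith : (0:ℝ) ≤ x - L)]

private lemma nag_aux_pow (q : ℝ) (hq : 0 < q) (hq1 : q ≤ 1) (t : ℕ) :
    Real.exp (t * q / 2) ≤ (1 + q) ^ t := by
  have hmul : Real.exp (q/2) * Real.exp (-(q/2)) = 1 := by
    rw [← Real.exp_add]; norm_num
  have h0 : 1 + -(q/2) ≤ Real.exp (-(q/2)) := by
    have := Real.add_one_le_exp (-(q/2)); linarith
  have h : Real.exp (q/2) ≤ 1 + q := by
    nlinarith [Real.exp_pos (q/2)]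
  calc Real.exp (t * q / 2) = Real.exp (q/2) ^ t := by
        rw [← Real.exp_nat_mul, mul_div_assoc]
    _ ≤ (1 + q) ^ t := pow_le_pow_left₀ (Real.exp_pos _).le h t

private lemma nag_sqrt_add (a b : ℝ) (ha : 0 ≤ a) (hb : 0 ≤ b) :
    Real.sqrt (a + b) ≤ Real.sqrt a + Real.sqrt b := by
  have h1 := Real.sq_sqrt ha
  have h2 := Real.sq_sqrt hb
  have h := Real.sqrt_le_sqrt (show a + b ≤ (Real.sqrt a + Real.sqrt b)^2 by
    nlinarith [Real.sqrt_nonneg a, Real.sqrt_nonneg b])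
  rwa [Real.sqrt_sq (by positivity)] at h

set_option maxHeartbeats 1000000 in
theorem nag_sc_weight_coefficient_sum (η μ : ℝ) (hη : 0 < η) (hμ : 0 < μ)
    (hημ : η * μ < 1) (B A : ℕ → ℝ) (hB0 : B 0 = 0)
    (hBrec : ∀ t : ℕ, B (t + 1) =
      (2 * B t + 1 + Real.sqrt (4 * B t + 4 * (η * μ) * B t ^ 2 + 1)) / (2 * (1 - η * μ)))
    (hA : ∀ t : ℕ, A t = B t + 1 / (η * μ)) :
    ∀ t : ℕ, 1 ≤ t →
      (∑ s ∈ Finset.range t, Real.sqrt (A (s + 1)) / A t) ≤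
        3 + 4 * Real.log (Real.exp 1 + 1 / (η * μ)) := by
  intro t ht
  set p := η * μ with hpdef
  have hp : 0 < p := mul_pos hη hμ
  have h1p : 0 < 1 - p := by linarith
  set q := Real.sqrt p with hqdef
  have hq : 0 < q := Real.sqrt_pos.2 hp
  have hq2 : q ^ 2 = p := Real.sq_sqrt hp.le
  have hq1 : q ≤ 1 := by nlinarith [sq_nonneg (q - 1)]
  set L := Real.log (Real.exp 1 + 1 / p) with hLdef
  have hL : 1 ≤ L := by
    rw [hLdef]
    exact (Real.le_log_iff_exp_le (by positivity)).2 (by nlinarith [one_div_pos.2 hp])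
  -- basic facts about B
  have hBnonneg : ∀ s, 0 ≤ B s := by
    intro s
    induction s with
    | zero => rw [hB0]
    | succ n ih =>
      rw [hBrec n]
      apply div_nonneg _ (by linarith)
      have := Real.sqrt_nonneg (4 * B n + 4 * p * B n ^ 2 + 1)
      linarith
  have hBstep : ∀ s, B s + 1/2 + Real.sqrt (B s) ≤ B (s+1) := by
    intro s
    have hb := hBnonneg s
    have hsq : 2 * Real.sqrt (B s) ≤ Real.sqrt (4 * B s + 4 * p * B s ^ 2 + 1) := by
      have h4 : Real.sqrt (4 * B s) ≤ Real.sqrt (4 * B s + 4 * p * B s ^ 2 + 1) :=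
        Real.sqrt_le_sqrt (by nlinarith)
      have he : Real.sqrt (4 * B s) = 2 * Real.sqrt (B s) := by
        rw [show (4:ℝ) * B s = 2^2 * B s by ring, Real.sqrt_mul (by norm_num),
          Real.sqrt_sq (by norm_num)]
      linarith [he ▸ h4]
    rw [hBrec s]
    have hs0 := Real.sqrt_nonneg (B s)
    calc B s + 1/2 + Real.sqrt (B s)
        = (2 * B s + 1 + 2 * Real.sqrt (B s)) / 2 := by ring
      _ ≤ (2 * B s + 1 + Real.sqrt (4 * B s + 4 * p * B s ^ 2 + 1)) / 2 := by
          gcongr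
      _ ≤ (2 * B s + 1 + Real.sqrt (4 * B s + 4 * p * B s ^ 2 + 1)) / (2 * (1 - p)) := by
          gcongr
          linarith
  have hBmul : ∀ s, (1 + q) * B s ≤ B (s+1) := by
    intro s
    have hb := hBnonneg s
    have hsq : 2 * q * B s ≤ Real.sqrt (4 * B s + 4 * p * B s ^ 2 + 1) := by
      have he : (2 * q * B s) ^ 2 = 4 * p * B s ^ 2 := by rw [← hq2]; ring
      have h4 : Real.sqrt (4 * p * B s ^ 2) ≤ Real.sqrt (4 * B s + 4 * p * B s ^ 2 + 1) :=
        Real.sqrt_le_sqrt (by nlinarith)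
      have h5 : Real.sqrt (4 * p * B s ^ 2) = 2 * q * B s := by
        rw [← he, Real.sqrt_sq (by positivity)]
      rw [h5] at h4
      exact h4
    rw [hBrec s]
    calc (1 + q) * B s = (2 * B s + 2 * q * B s) / 2 := by ring
      _ ≤ (2 * B s + 1 + Real.sqrt (4 * B s + 4 * p * B s ^ 2 + 1)) / 2 := by
          gcongr ?x / 2
          linarith
      _ ≤ (2 * B s + 1 + Real.sqrt (4 * B s + 4 * p * B s ^ 2 + 1)) / (2 * (1 - p)) := by
          gcongr
          linarith
  have hB1 : 1 ≤ B 1 := by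
    have h := hBrec 0
    rw [hB0] at h
    norm_num [Real.sqrt_one] at h
    rw [h, le_div_iff₀ (by linarith)]
    linarith
  have hBone : ∀ s, 1 ≤ B (s+1) := by
    intro s
    induction s with
    | zero => exact hB1
    | succ n ih =>
      have := hBstep (n+1)
      have := Real.sqrt_nonneg (B (n+1))
      linarith
  have hBgrow : ∀ s : ℕ, (1 + q) ^ s ≤ B (s+1) := by
    intro s
    induction s with
    | zero => simpa using hB1
    | succ n ih =>
      calc (1 + q) ^ (n+1) = (1 + q) * (1 + q) ^ n := by ring
        _ ≤ (1 + q) * B (n+1) := by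
            have : (0:ℝ) ≤ 1 + q := by linarith
            exact mul_le_mul_of_nonneg_left ih this
        _ ≤ B (n+2) := hBmul (n+1)
  have hsum : ∀ s : ℕ, (∑ i ∈ Finset.range (s+1), Real.sqrt (B (i+1)))
      ≤ B (s+1) + Real.sqrt (B (s+1)) := by
    intro s
    induction s with
    | zero => simp [Finset.sum_range_one]; linarith [hBnonneg 1]
    | succ n ih =>
      rw [Finset.sum_range_succ]
      linarith [hBstep (n+1)]
  obtain ⟨m, rfl⟩ : ∃ m, t = m + 1 := ⟨t - 1, by omega⟩
  have hAeq := hA (m+1)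
  have hApos : 0 < A (m+1) := by
    rw [hAeq]
    have := hBnonneg (m+1)
    positivity
  -- bound on (m+1)/q
  set T : ℝ := (m:ℝ) + 1 with hTdef
  have hT0 : 0 ≤ T := by positivity
  have hexp := nag_aux_exp p (T * q / 2) hp (by positivity)
  have hpow : Real.exp (T * q / 2) ≤ (1 + q) ^ (m+1) := by
    have := nag_aux_pow q hq hq1 (m+1)
    rwa [show ((m+1 : ℕ) : ℝ) = T by push_cast [hTdef]; ring] at this
  have hBA : B (m+1) ≤ A (m+1) := by
    rw [hAeq]; have := one_div_pos.2 hp; linarith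
  have hexpB : Real.exp (T * q / 2) ≤ 2 * B (m+1) := by
    calc Real.exp (T * q / 2) ≤ (1 + q) ^ (m+1) := hpow
      _ = (1 + q) * (1 + q) ^ m := by ring
      _ ≤ 2 * (1 + q) ^ m := by
          have : (0:ℝ) ≤ (1 + q) ^ m := by positivity
          nlinarith
      _ ≤ 2 * B (m+1) := by linarith [hBgrow m]
  have htq : T * (1 / q) ≤ 4 * L * A (m+1) := by
    have hstep : T * q / 2 ≤ L * (2 * p * A (m+1)) := by
      have h1 : L * (p * Real.exp (T * q / 2) + 1) ≤ L * (2 * p * B (m+1) + 1) := by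
        have hm := mul_le_mul_of_nonneg_left hexpB hp.le
        apply mul_le_mul_of_nonneg_left _ (by linarith : (0:ℝ) ≤ L)
        nlinarith
      have h2 : 2 * p * B (m+1) + 1 ≤ 2 * p * A (m+1) := by
        have hinv : p * (1/p) = 1 := mul_one_div_cancel hp.ne'
        rw [hAeq]
        nlinarith [hinv]
      have h3 : L * (2 * p * B (m+1) + 1) ≤ L * (2 * p * A (m+1)) :=
        mul_le_mul_of_nonneg_left h2 (by linarith : (0:ℝ) ≤ L)
      calc T * q / 2 ≤ L * (p * Real.exp (T * q / 2) + 1) := hexp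
        _ ≤ L * (2 * p * A (m+1)) := le_trans h1 h3
    have hTq : T * q ≤ 4 * L * A (m+1) * q * q := by
      have : 4 * L * A (m+1) * q * q = 4 * L * A (m+1) * p := by
        rw [← hq2]; ring
      rw [this]; nlinarith [hstep]
    have hT4 : T ≤ 4 * L * A (m+1) * q := le_of_mul_le_mul_right (by linarith) hq
    rw [mul_one_div, div_le_iff₀ hq]
    linarith
  -- term-wise bound
  have hterm : ∀ i ∈ Finset.range (m+1),
      Real.sqrt (A (i+1)) ≤ Real.sqrt (B (i+1)) + 1 / q := by
    intro i _
    rw [hA (i+1)]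
    have h1 := nag_sqrt_add (B (i+1)) (1/p) (hBnonneg (i+1)) (by positivity)
    have h2 : Real.sqrt (1/p) = 1 / q := by
      rw [one_div, Real.sqrt_inv, one_div]
    rw [h2] at h1
    linarith
  have hsqB : Real.sqrt (B (m+1)) ≤ B (m+1) := by
    have h := Real.sqrt_le_sqrt (show B (m+1) ≤ B (m+1) ^ 2 by nlinarith [hBone m])
    rwa [Real.sqrt_sq (hBnonneg (m+1))] at h
  rw [← Finset.sum_div, div_le_iff₀ hApos]
  calc (∑ s ∈ Finset.range (m+1), Real.sqrt (A (s+1)))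
      ≤ ∑ s ∈ Finset.range (m+1), (Real.sqrt (B (s+1)) + 1 / q) :=
        Finset.sum_le_sum hterm
    _ = (∑ s ∈ Finset.range (m+1), Real.sqrt (B (s+1))) + T * (1 / q) := by
        rw [Finset.sum_add_distrib, Finset.sum_const, Finset.card_range]
        push_cast [hTdef]; ring
    _ ≤ (B (m+1) + Real.sqrt (B (m+1))) + 4 * L * A (m+1) := by
        linarith [hsum m, htq]
    _ ≤ (3 + 4 * L) * A (m+1) := by nlinarith
end

section
/- Let 0 < ημ < 1 and define A_t = B_t + 1/(ημ) with B_0 = 0 and (B_{s+1} − B_s)² = B_{s+1}(1 + ημ B_{s+1}), B_{s+1} ≥ B_s. Then for all 0 ≤ s ≤ t: [(B_{t+1}−B_t)/B_{t+1}]·[(B_{s+1}−B_s)/(1+ημB_{s+1})] ≤ 1. -/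
theorem nag_sc_coef_product_le_one (η μ : ℝ) (hη : 0 < η) (hμ : 0 < μ) (hημ : η * μ < 1)
    (B : ℕ → ℝ) (hB0 : B 0 = 0)
    (hmono : ∀ s : ℕ, B s ≤ B (s + 1))
    (hrec : ∀ s : ℕ, (B (s + 1) - B s) ^ 2 = B (s + 1) * (1 + η * μ * B (s + 1))) :
    ∀ s t : ℕ, s ≤ t →
      (B (t + 1) - B t) / B (t + 1) * ((B (s + 1) - B s) / (1 + η * μ * B (s + 1))) ≤ 1 := by
  have hMono : Monotone B := monotone_nat_of_le_succ hmono
  have hnn : ∀ n, 0 ≤ B n := fun n => hB0 ▸ hMono (Nat.zero_le n)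
  intro s t hst
  set a := B s with ha
  set b := B (s + 1) with hb
  set c := B t with hc
  set d := B (t + 1) with hd
  have hab : a ≤ b := hmono s
  have hcd : c ≤ d := hmono t
  have hbd : b ≤ d := hMono (by omega : s + 1 ≤ t + 1)
  have ha0 : 0 ≤ a := hnn s
  have hc0 : 0 ≤ c := hnn t
  have hbnn : 0 ≤ b := hnn (s+1)
  have hdnn : 0 ≤ d := hnn (t+1)
  have hηb : (0:ℝ) < 1 + η * μ * b := by nlinarith [mul_pos hη hμ]
  rcases eq_or_lt_of_le hbnn with hb0 | hb0
  · -- B (s+1) = 0, hence a = 0 and the second factor is 0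
    have h1 : b - a = 0 := by nlinarith
    rw [h1]
    simp
  · have hd0 : 0 < d := lt_of_lt_of_le hb0 hbd
    have hηd : (0:ℝ) < 1 + η * μ * d := by nlinarith [mul_pos hη hμ]
    have hrs := hrec s
    have hrt := hrec t
    rw [← hb, ← ha] at hrs
    rw [← hd, ← hc] at hrt
    -- key: (d - c) * (b - a) ≤ d * (1 + η*μ*b)
    have hkey : (d - c) * (b - a) ≤ d * (1 + η * μ * b) := by
      have hX0 : 0 ≤ (d - c) * (b - a) := mul_nonneg (by linarith) (by linarith)
      have hY0 : 0 ≤ d * (1 + η * μ * b) := le_of_lt (mul_pos hd0 hηb)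
      have hsq : ((d - c) * (b - a)) ^ 2 ≤ (d * (1 + η * μ * b)) ^ 2 := by
        have : ((d - c) * (b - a)) ^ 2 = (d - c)^2 * (b - a)^2 := by ring
        rw [this, hrs, hrt]
        nlinarith [mul_pos hd0 hb0, mul_pos hηd hηb]
      exact le_of_pow_le_pow_left₀ (by norm_num) hY0 hsq
    rw [div_mul_div_comm, div_le_one (by positivity)]
    linarith
end
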